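/- arXiv:1307.0384 — 8 statements merged into one kernel-verified Lean document; each statement's English description precedes it below -/
import Mathlib

section
/- Let P(T) ∈ 𝒪_E[[T]] be a power series all of whose coefficients of P(T) − T^q lie in 𝔪_E (i.e. P reduces to T^q modulo 𝔪_E). Then there exists a ∈ 𝔪_E such that the convergent series P(a) = Σ_{n≥0} c_n a^n (where c_n are the coefficients of P) sums to a, and moreover ‖a‖ = ‖c_0‖, i.e. the absolute value of a equals that of the constant coefficient P(0). -/
open PowerSeries

/-- The ring of integers of an ultrametric normed field: elements of norm at most `1`. -/
noncomputable def ringOfIntegers (E : Type*) [NormedField E] [IsUltrametricDist E] :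
    Subring E where
  carrier := {x | ‖x‖ ≤ 1}
  mul_mem' := fun {a b} ha hb => by
    simpa [norm_mul] using mul_le_one₀ ha (norm_nonneg _) hb
  one_mem' := by simp
  add_mem' := fun {a b} ha hb =>
    le_trans (IsUltrametricDist.norm_add_le_max a b) (max_le ha hb)
  zero_mem' := by simp
  neg_mem' := fun {a} ha => by simpa using ha

/-- The maximal ideal of the ring of integers: elements of norm less than `1`. -/
noncomputable def maxIdeal (E : Type*) [NormedField E] [IsUltrametricDist E] :
    Ideal (ringOfIntegers E) where
  carrier := {x | ‖(x : E)‖ < 1}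
  add_mem' := fun {a b} ha hb =>
    lt_of_le_of_lt (IsUltrametricDist.norm_add_le_max (a : E) (b : E)) (max_lt ha hb)
  zero_mem' := by simp
  smul_mem' := fun c x hx => by
    have hc : ‖(c : E)‖ ≤ 1 := c.2
    calc ‖((c • x : ringOfIntegers E) : E)‖ = ‖(c : E)‖ * ‖(x : E)‖ := by
          simp [norm_mul]
      _ ≤ 1 * ‖(x : E)‖ := by gcongr
      _ < 1 := by simpa using hx

section Aux

variable {E : Type*} [NormedField E] [IsUltrametricDist E]

lemma aux_pow_sub_pow_le {r : ℝ} {x y : E} (hx : ‖x‖ ≤ r) (hy : ‖y‖ ≤ r) :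
    ∀ n : ℕ, ‖x ^ (n + 1) - y ^ (n + 1)‖ ≤ ‖x - y‖ * r ^ n := by
  have hr : 0 ≤ r := le_trans (norm_nonneg x) hx
  intro n
  induction n with
  | zero => simp
  | succ n ih =>
    have key : x ^ (n + 1 + 1) - y ^ (n + 1 + 1)
        = x * (x ^ (n + 1) - y ^ (n + 1)) + (x - y) * y ^ (n + 1) := by ring
    rw [key]
    refine le_trans (IsUltrametricDist.norm_add_le_max _ _) (max_le ?_ ?_)
    · rw [norm_mul]
      calc ‖x‖ * ‖x ^ (n + 1) - y ^ (n + 1)‖ ≤ r * (‖x - y‖ * r ^ n) :=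
            mul_le_mul hx ih (norm_nonneg _) hr
        _ = ‖x - y‖ * r ^ (n + 1) := by ring
    · rw [norm_mul, norm_pow]
      exact mul_le_mul_of_nonneg_left (pow_le_pow_left₀ (norm_nonneg y) hy _) (norm_nonneg _)

end Aux

/-- If `E` is a finite extension of `ℚ_p` with residue field of cardinality
`q`, and `P(T) ∈ 𝒪_E[[T]]` reduces to `T^q` modulo the maximal ideal `𝔪_E`, then there is an
`a ∈ 𝔪_E` with `P(a) = a` and `‖a‖ = ‖P(0)‖`. -/
theorem exists_fixedPoint_of_reduction_eq_pow
    {p : ℕ} [Fact p.Prime] (E : Type*) [NormedField E] [IsUltrametricDist E]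
    [NormedAlgebra ℚ_[p] E] [FiniteDimensional ℚ_[p] E]
    (q : ℕ) (hq : q = Nat.card ((ringOfIntegers E) ⧸ (maxIdeal E)))
    (P : PowerSeries E) (hPint : ∀ n, ‖coeff n P‖ ≤ 1)
    (hPred : ∀ n, ‖coeff n (P - X ^ q)‖ < 1) :
    ∃ a : E, ‖a‖ < 1 ∧ HasSum (fun n => coeff n P * a ^ n) a ∧
      ‖a‖ = ‖coeff 0 P‖ := by
  haveI : CompleteSpace E := FiniteDimensional.complete ℚ_[p] E
  haveI : ProperSpace E := FiniteDimensional.proper ℚ_[p] E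
  -- step 1: q ≥ 2
  haveI hcompact : CompactSpace (ringOfIntegers E) := by
    have h : ((ringOfIntegers E : Set E)) = Metric.closedBall 0 1 := by
      ext x
      rw [Metric.mem_closedBall, dist_zero_right]
      exact Iff.rfl
    have h2 : IsCompact ((ringOfIntegers E : Set E)) := by
      rw [h]; exact isCompact_closedBall 0 1
    exact isCompact_iff_compactSpace.mp h2
  have hopen : IsOpen (((maxIdeal E).toAddSubgroup : Set (ringOfIntegers E))) := by
    have h : (((maxIdeal E).toAddSubgroup : Set (ringOfIntegers E))) =
        (Subtype.val : ringOfIntegers E → E) ⁻¹' (Metric.ball (0 : E) 1) := by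
      ext x
      simp only [Set.mem_preimage, Metric.mem_ball, dist_zero_right]
      rfl
    rw [h]
    exact Metric.isOpen_ball.preimage continuous_subtype_val
  have hfin1 : Finite ((ringOfIntegers E) ⧸ (maxIdeal E).toAddSubgroup) :=
    AddSubgroup.quotient_finite_of_isOpen _ hopen
  haveI hfin : Finite ((ringOfIntegers E) ⧸ (maxIdeal E)) := by
    refine Finite.of_surjective
      (fun x : (ringOfIntegers E) ⧸ (maxIdeal E).toAddSubgroup =>
        Quotient.liftOn' x (Ideal.Quotient.mk (maxIdeal E)) ?_) ?_
    · intro a b h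
      rw [QuotientAddGroup.leftRel_apply] at h
      rw [Ideal.Quotient.mk_eq_mk_iff_sub_mem]
      have : -(-a + b) ∈ maxIdeal E := neg_mem h
      simpa [neg_add_rev, sub_eq_add_neg, add_comm] using this
    · intro y
      obtain ⟨z, rfl⟩ := Ideal.Quotient.mk_surjective y
      exact ⟨QuotientAddGroup.mk z, rfl⟩
  haveI hnontriv : Nontrivial ((ringOfIntegers E) ⧸ (maxIdeal E)) := by
    refine Ideal.Quotient.nontrivial_iff.mpr ?_
    intro h
    have h1 : (1 : ringOfIntegers E) ∈ maxIdeal E := h ▸ Submodule.mem_top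
    have : ‖((1 : ringOfIntegers E) : E)‖ < 1 := h1
    simp at this
  have hq2 : 2 ≤ q := by
    rw [hq]
    exact Finite.one_lt_card
  -- step 2: coefficient facts
  have hlt : ∀ n, n ≠ q → ‖coeff n P‖ < 1 := by
    intro n hn
    have := hPred n
    rwa [map_sub, coeff_X_pow, if_neg hn, sub_zero] at this
  have h0 : ‖coeff 0 P‖ < 1 := hlt 0 (by omega)
  have h1 : ‖coeff 1 P‖ < 1 := hlt 1 (by omega)
  by_cases hc0 : coeff 0 P = 0
  · refine ⟨0, by simp, ?_, by simp [hc0]⟩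
    have := hasSum_single (f := fun n => coeff n P * (0 : E) ^ n) 0
      (fun b hb => by simp [zero_pow hb])
    simpa [hc0] using this
  · set r : ℝ := ‖coeff 0 P‖ with hr
    have hr0 : 0 < r := norm_pos_iff.mpr hc0
    have hr1 : r < 1 := h0
    -- summability on the closed ball
    have hsum : ∀ x : E, ‖x‖ ≤ r → Summable (fun n => coeff n P * x ^ n) := by
      intro x hx
      refine Summable.of_norm_bounded (summable_geometric_of_lt_one hr0.le hr1) ?_
      intro n
      rw [norm_mul, norm_pow]
      calc ‖coeff n P‖ * ‖x‖ ^ n ≤ 1 * r ^ n :=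
            mul_le_mul (hPint n) (pow_le_pow_left₀ (norm_nonneg x) hx n)
              (by positivity) one_pos.le
        _ = r ^ n := one_mul _
    -- the map sends the ball into itself
    have hmap : ∀ x : E, ‖x‖ ≤ r → ‖∑' n, coeff n P * x ^ n‖ ≤ r := by
      intro x hx
      refine IsUltrametricDist.norm_tsum_le_of_forall_le_of_nonneg hr0.le ?_
      intro n
      rw [norm_mul, norm_pow]
      rcases n with _ | m
      · simpa using le_of_eq hr.symm
      · calc ‖coeff (m + 1) P‖ * ‖x‖ ^ (m + 1) ≤ 1 * r ^ (m + 1) :=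
              mul_le_mul (hPint _) (pow_le_pow_left₀ (norm_nonneg x) hx _)
                (by positivity) one_pos.le
          _ = r ^ (m + 1) := one_mul _
          _ ≤ r := pow_le_of_le_one hr0.le hr1.le (by omega)
    set k : ℝ := max ‖coeff 1 P‖ r with hkdef
    have hk1 : k < 1 := max_lt h1 hr1
    have hk0 : 0 ≤ k := le_trans hr0.le (le_max_right _ _)
    set S : Set E := Metric.closedBall 0 r with hS
    haveI : CompleteSpace S := Metric.isClosed_closedBall.completeSpace_coe
    haveI : Nonempty S := ⟨⟨0, by simp [hS, hr0.le]⟩⟩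
    have hmem : ∀ x : S, ‖(x : E)‖ ≤ r := fun x => by
      have hx2 : (x : E) ∈ Metric.closedBall (0 : E) r := x.2
      rwa [Metric.mem_closedBall, dist_zero_right] at hx2
    set F : S → S := fun x =>
      ⟨∑' n, coeff n P * (x : E) ^ n, by
        simpa [hS, Metric.mem_closedBall, dist_zero_right] using hmap x (hmem x)⟩ with hF
    -- contraction estimate
    have hdist : ∀ x y : S, dist (F x) (F y) ≤ k * dist x y := by
      intro x y
      have hx := hmem x
      have hy := hmem y
      simp only [Subtype.dist_eq, dist_eq_norm]
      have hbound : ‖∑' n, (coeff n P * (x : E) ^ n - coeff n P * (y : E) ^ n)‖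
          ≤ k * ‖(x : E) - (y : E)‖ := by
        refine IsUltrametricDist.norm_tsum_le_of_forall_le_of_nonneg
          (mul_nonneg hk0 (norm_nonneg _)) ?_
        intro n
        rw [← mul_sub, norm_mul]
        rcases n with _ | m
        · simpa using mul_nonneg hk0 (norm_nonneg ((x : E) - (y : E)))
        · have hpow := aux_pow_sub_pow_le hx hy m
          rcases m with _ | l
          · calc ‖coeff 1 P‖ * ‖(x : E) ^ 1 - (y : E) ^ 1‖
                ≤ ‖coeff 1 P‖ * (‖(x : E) - (y : E)‖ * r ^ 0) :=
                  mul_le_mul_of_nonneg_left hpow (norm_nonneg _)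
              _ = ‖coeff 1 P‖ * ‖(x : E) - (y : E)‖ := by ring
              _ ≤ k * ‖(x : E) - (y : E)‖ :=
                  mul_le_mul_of_nonneg_right (le_max_left _ _) (norm_nonneg _)
          · calc ‖coeff (l + 2) P‖ * ‖(x : E) ^ (l + 2) - (y : E) ^ (l + 2)‖
                ≤ 1 * (‖(x : E) - (y : E)‖ * r ^ (l + 1)) :=
                  mul_le_mul (hPint _) hpow (norm_nonneg _) one_pos.le
              _ = r ^ (l + 1) * ‖(x : E) - (y : E)‖ := by ring
              _ ≤ k * ‖(x : E) - (y : E)‖ := by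
                  refine mul_le_mul_of_nonneg_right ?_ (norm_nonneg _)
                  exact le_trans (pow_le_of_le_one hr0.le hr1.le (by omega))
                    (le_max_right _ _)
      exact le_trans (le_of_eq (congrArg norm
        (((hsum _ hx).hasSum.sub (hsum _ hy).hasSum).tsum_eq.symm))) hbound
    have hcontr : ContractingWith ⟨k, hk0⟩ F := by
      constructor
      · exact_mod_cast hk1
      · exact LipschitzWith.of_dist_le_mul hdist
    set a' : S := hcontr.fixedPoint F with ha'
    have hfix : F a' = a' := hcontr.fixedPoint_isFixedPt
    set a : E := (a' : E) with ha
    have har : ‖a‖ ≤ r := hmem a'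
    have htsum : ∑' n, coeff n P * a ^ n = a := by
      have h := congrArg Subtype.val hfix
      exact h
    have hHasSum : HasSum (fun n => coeff n P * a ^ n) a :=
      (hsum a har).hasSum_iff.mpr htsum
    -- norm computation
    have htail : ‖a - coeff 0 P‖ < r := by
      have hz := Summable.tsum_eq_zero_add (hsum a har)
      have heq : a - coeff 0 P = ∑' n, coeff (n + 1) P * a ^ (n + 1) := by
        rw [htsum, pow_zero, mul_one] at hz
        exact sub_eq_of_eq_add' hz
      rw [heq]
      have hb : ‖(∑' n, coeff (n + 1) P * a ^ (n + 1))‖ ≤ k * r := by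
        refine IsUltrametricDist.norm_tsum_le_of_forall_le_of_nonneg
          (mul_nonneg hk0 (norm_nonneg _)) ?_
        intro n
        rw [norm_mul, norm_pow]
        rcases n with _ | m
        · calc ‖coeff 1 P‖ * ‖a‖ ^ 1 ≤ ‖coeff 1 P‖ * r := by
                rw [pow_one]
                exact mul_le_mul_of_nonneg_left har (norm_nonneg _)
            _ ≤ k * r := mul_le_mul_of_nonneg_right (le_max_left _ _) hr0.le
        · calc ‖coeff (m + 2) P‖ * ‖a‖ ^ (m + 2) ≤ 1 * r ^ (m + 2) :=
                mul_le_mul (hPint _) (pow_le_pow_left₀ (norm_nonneg a) har _)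
                  (by positivity) one_pos.le
            _ = r ^ (m + 1) * r := by ring
            _ ≤ k * r := by
                refine mul_le_mul_of_nonneg_right ?_ hr0.le
                exact le_trans (pow_le_of_le_one hr0.le hr1.le (by omega))
                  (le_max_right _ _)
      calc ‖(∑' n, coeff (n + 1) P * a ^ (n + 1))‖ ≤ k * r := hb
        _ < 1 * r := by exact mul_lt_mul_of_pos_right hk1 hr0
        _ = r := one_mul r
    have hnormeq : ‖a‖ = ‖coeff 0 P‖ := by
      have hne : ‖coeff 0 P‖ ≠ ‖a - coeff 0 P‖ := (ne_of_lt (hr ▸ htail)).symm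
      calc ‖a‖ = ‖coeff 0 P + (a - coeff 0 P)‖ := by ring_nf
        _ = max ‖coeff 0 P‖ ‖a - coeff 0 P‖ :=
            IsUltrametricDist.norm_add_eq_max_of_norm_ne_norm hne
        _ = ‖coeff 0 P‖ := max_eq_left (le_of_lt (hr ▸ htail))
    exact ⟨a, lt_of_le_of_lt har hr1, hHasSum, hnormeq⟩
end

section
/- Let R be an integral domain of characteristic zero. Let P(T) ∈ R[[T]] be a nonzero power series with zero constant term, and let F(T) ∈ R[[T]] be a power series with zero constant term whose coefficient of T equals 1 and with F ≠ T. If F(P(T)) = P(F(T)) (formal composition), then the coefficient of T in P is nonzero. -/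
open PowerSeries

/-- Formal substitution `f(g)` of a power series `g` with zero constant term into a power
series `f`: the coefficient of `T^n` in `f(g)` is `∑_{k ≤ n} f_k · (coefficient of `T^n` in
`g^k`)`, which is the usual formal composition since `g^k` has order at least `k`. -/
noncomputable def PowerSeries.comp {R : Type*} [CommRing R] (f g : PowerSeries R) :
    PowerSeries R :=
  PowerSeries.mk fun n => ∑ k ∈ Finset.range (n + 1), coeff k f * coeff n (g ^ k)

private lemma aux_mul {R : Type*} [CommRing R] {f g : PowerSeries R} {a b : ℕ}
    (hf : ∀ i < a, coeff i f = 0) (hg : ∀ i < b, coeff i g = 0) :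
    ∀ i < a + b, coeff i (f * g) = 0 := by
  intro i hi
  rw [coeff_mul]
  apply Finset.sum_eq_zero
  intro p hp
  rw [Finset.HasAntidiagonal.mem_antidiagonal] at hp
  rcases lt_or_ge p.1 a with h | h
  · rw [hf _ h, zero_mul]
  · rw [hg p.2 (by omega), mul_zero]

private lemma aux_pow {R : Type*} [CommRing R] {f : PowerSeries R} {a : ℕ}
    (hf : ∀ i < a, coeff i f = 0) : ∀ k, ∀ i < k * a, coeff i (f ^ k) = 0 := by
  intro k
  induction k with
  | zero => intro i hi; omega
  | succ k ih =>
    intro i hi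
    have h : (k + 1) * a = k * a + a := by ring
    rw [pow_succ]
    exact aux_mul ih hf i (by omega)

private lemma aux_diag {R : Type*} [CommRing R] {f : PowerSeries R}
    (h0 : constantCoeff f = 0) (k : ℕ) : coeff k (f ^ k) = (coeff 1 f) ^ k := by
  have h0' : ∀ i < 1, coeff i f = 0 := by
    intro i hi
    interval_cases i
    rw [coeff_zero_eq_constantCoeff_apply, h0]
  induction k with
  | zero => simp
  | succ k ih =>
    rw [pow_succ, coeff_mul, Finset.sum_eq_single (k, 1)]
    · rw [ih, pow_succ]
    · rintro ⟨i, j⟩ hp hne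
      rw [Finset.HasAntidiagonal.mem_antidiagonal] at hp
      simp only at hp ⊢
      rcases lt_or_ge i k with h | h
      · rw [aux_pow h0' k i (by omega), zero_mul]
      · have hj : j < 1 := by
          rcases Nat.lt_or_ge j 1 with h' | h'
          · exact h'
          · exfalso
            apply hne
            have hik : i = k := by omega
            have hj1 : j = 1 := by omega
            simp [hik, hj1]
        rw [h0' j hj, mul_zero]
    · intro h
      exact absurd (by simp : (k, 1) ∈ Finset.HasAntidiagonal.antidiagonal (k + 1)) h

/-- Let `R` be an integral domain of characteristic zero, `P ∈ R[[T]]`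
nonzero with zero constant term, and `F ∈ R[[T]]` with zero constant term, coefficient of `T`
equal to `1`, and `F ≠ T`. If `F(P(T)) = P(F(T))`, then the coefficient of `T` in `P` is
nonzero. -/
theorem coeff_one_ne_zero_of_commute_with_tangent_to_identity
    {R : Type*} [CommRing R] [IsDomain R] [CharZero R]
    (P F : PowerSeries R)
    (hP0 : constantCoeff P = 0) (hPne : P ≠ 0)
    (hF0 : constantCoeff F = 0) (hF1 : coeff 1 F = 1) (hFne : F ≠ X)
    (hcomm : F.comp P = P.comp F) :
    coeff 1 P ≠ 0 := by
  classical
  intro h1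
  -- m : the order of P
  have hex : ∃ m, coeff m P ≠ 0 := by
    by_contra h
    push_neg at h
    exact hPne (PowerSeries.ext fun n => by rw [h n, map_zero])
  set m := Nat.find hex with hm_def
  have hm : coeff m P ≠ 0 := Nat.find_spec hex
  have hmin : ∀ i < m, coeff i P = 0 := fun i hi => not_not.mp (Nat.find_min hex hi)
  have hm2 : 2 ≤ m := by
    by_contra h
    push_neg at h
    interval_cases m
    · exact hm (by rw [coeff_zero_eq_constantCoeff_apply, hP0])
    · exact hm h1
  -- q : the order of F - X
  set G : PowerSeries R := F - X with hG_def
  have hG : G ≠ 0 := sub_ne_zero.mpr hFne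
  have hexq : ∃ q, coeff q G ≠ 0 := by
    by_contra h
    push_neg at h
    exact hG (PowerSeries.ext fun n => by rw [h n, map_zero])
  set q := Nat.find hexq with hq_def
  have hq : coeff q G ≠ 0 := Nat.find_spec hexq
  have hqmin : ∀ i < q, coeff i G = 0 := fun i hi => not_not.mp (Nat.find_min hexq hi)
  have hq2 : 2 ≤ q := by
    by_contra h
    push_neg at h
    interval_cases q
    · exact hq (by simp [hG_def, coeff_zero_eq_constantCoeff_apply, hF0])
    · exact hq (by simp [hG_def, hF1])
  have hFcoeff : ∀ i, i ≠ 1 → i < q → coeff i F = 0 := by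
    intro i hi1 hiq
    have h := hqmin i hiq
    rw [hG_def, map_sub, coeff_X, if_neg hi1, sub_zero] at h
    exact h
  set n := m + q - 1 with hn_def
  have hFX : F = X + G := by rw [hG_def]; ring
  have hGpow := aux_pow hqmin
  have hPpow := aux_pow hmin
  -- coefficient of a single term in the binomial expansion
  have hterm : ∀ k j : ℕ,
      coeff n (X ^ j * G ^ (k - j) * ((k.choose j : ℕ) : PowerSeries R))
        = (if j ≤ n then coeff (n - j) (G ^ (k - j)) else 0) * (k.choose j : R) := by
    intro k j
    rw [← map_natCast C (k.choose j), coeff_mul_C, coeff_X_pow_mul']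
  -- coefficient facts about powers of F
  have hFm : coeff n (F ^ m) = (m : R) * coeff q G := by
    rw [hFX, add_pow, map_sum]
    rw [Finset.sum_eq_single (m - 1)]
    · rw [hterm, if_pos (by omega)]
      have e1 : m - (m - 1) = 1 := by omega
      have e2 : n - (m - 1) = q := by omega
      have e3 : m.choose (m - 1) = m := by
        rw [show m - 1 = m - 1 from rfl, Nat.choose_symm (by omega : 1 ≤ m),
          Nat.choose_one_right]
      rw [e1, e2, e3, pow_one, mul_comm]
    · intro j hj hjne
      rw [Finset.mem_range] at hj
      rw [hterm]
      by_cases hjm : j = m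
      · subst hjm
        rw [if_pos (by omega)]
        have : (G : PowerSeries R) ^ (m - m) = 1 := by rw [Nat.sub_self, pow_zero]
        rw [this, coeff_one, if_neg (by omega), zero_mul]
      · -- j ≤ m - 2, so G-power has order ≥ 2q > n - j
        have hjlt : j + 2 ≤ m := by omega
        rw [if_pos (by omega)]
        set t := m - j with ht_def
        have ht2 : 2 ≤ t := by omega
        have ha : 2 * (q - 1) ≤ t * (q - 1) := Nat.mul_le_mul_right _ (by omega)
        have hb : t * (q - 1) + t = t * q := by
          rw [← Nat.mul_succ]
          congr 1
          omega
        rw [hGpow t (n - j) (by omega), zero_mul]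
    · intro h
      exact absurd (Finset.mem_range.mpr (by omega)) h
  have hFmid : ∀ k, m < k → k < n → coeff n (F ^ k) = 0 := by
    intro k hkm hkn
    rw [hFX, add_pow, map_sum]
    apply Finset.sum_eq_zero
    intro j hj
    rw [Finset.mem_range] at hj
    rw [hterm]
    by_cases hjk : j = k
    · subst hjk
      rw [if_pos (by omega), Nat.sub_self, pow_zero, coeff_one, if_neg (by omega), zero_mul]
    · rw [if_pos (by omega)]
      set t := k - j with ht_def
      have ht1 : 1 ≤ t := by omega
      have ha : 1 * (q - 1) ≤ t * (q - 1) := Nat.mul_le_mul_right _ (by omega)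
      have hb : t * (q - 1) + t = t * q := by
        rw [← Nat.mul_succ]
        congr 1
        omega
      rw [hGpow t (n - j) (by omega), zero_mul]
  have hFn : coeff n (F ^ n) = 1 := by
    rw [aux_diag hF0, hF1, one_pow]
  -- LHS: coefficient of T^n in F ∘ P
  have hL : coeff n (F.comp P) = coeff n P := by
    rw [PowerSeries.comp, coeff_mk]
    rw [Finset.sum_eq_single 1]
    · rw [hF1, one_mul, pow_one]
    · intro k hk hk1
      by_cases hkq : k < q
      · rw [hFcoeff k hk1 hkq, zero_mul]
      · push_neg at hkq
        have h2 : m + q ≤ q * m := by nlinarith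
        have h3 : q * m ≤ k * m := Nat.mul_le_mul_right m hkq
        rw [hPpow k n (by omega), mul_zero]
    · intro h
      exact absurd (Finset.mem_range.mpr (by omega)) h
  -- RHS: coefficient of T^n in P ∘ F
  have hmn : m ≠ n := by omega
  have hsub : ({m, n} : Finset ℕ) ⊆ Finset.range (n + 1) := by
    intro x hx
    rw [Finset.mem_insert, Finset.mem_singleton] at hx
    rcases hx with rfl | rfl <;> exact Finset.mem_range.mpr (by omega)
  have hzero : ∀ k ∈ Finset.range (n + 1), k ∉ ({m, n} : Finset ℕ) →
      coeff k P * coeff n (F ^ k) = 0 := by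
    intro k hk hknot
    rw [Finset.mem_insert, Finset.mem_singleton] at hknot
    push_neg at hknot
    rw [Finset.mem_range] at hk
    rcases lt_or_ge k m with h | h
    · rw [hmin k h, zero_mul]
    · have hkm : m < k := lt_of_le_of_ne h (Ne.symm hknot.1)
      have hkn : k < n := lt_of_le_of_ne (by omega) hknot.2
      rw [hFmid k hkm hkn, mul_zero]
  have hR : coeff n (P.comp F)
      = coeff m P * ((m : R) * coeff q G) + coeff n P := by
    rw [PowerSeries.comp, coeff_mk, ← Finset.sum_subset hsub hzero,
      Finset.sum_pair hmn, hFm, hFn, mul_one]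
  have heq := congrArg (coeff n) hcomm
  rw [hL, hR] at heq
  have hkey : coeff m P * ((m : R) * coeff q G) = 0 := by
    linear_combination -heq
  rcases mul_eq_zero.mp hkey with h | h
  · exact hm h
  · rcases mul_eq_zero.mp h with h' | h'
    · exact (Nat.cast_ne_zero.mpr (by omega : m ≠ 0)) h'
    · exact hq h'
end

section
/- Let R be an integral domain. Let P(T) ∈ R[[T]] be a nonzero power series with zero constant term, let k ≥ 1 be the order of P (the smallest index of a nonzero coefficient) and π_k its coefficient of T^k. Let F(T) ∈ R[[T]] have zero constant term and coefficient of T equal to c. If F(P(T)) = P(F(T)), then c·π_k = π_k·c^k, and hence c^k = c. -/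
open PowerSeries

lemma coeff_pow_zero_of_lt {R : Type*} [CommRing R] (P : PowerSeries R) (k : ℕ)
    (horder : ∀ i < k, coeff i P = 0) :
    ∀ j n, n < j * k → coeff n (P ^ j) = 0 := by
  intro j
  induction j with
  | zero => intro n hn; omega
  | succ j ih =>
    intro n hn
    rw [Nat.succ_mul] at hn
    rw [pow_succ, coeff_mul]
    apply Finset.sum_eq_zero
    intro p hp
    rw [Finset.HasAntidiagonal.mem_antidiagonal] at hp
    by_cases h : p.1 < j * k
    · rw [ih p.1 h, zero_mul]
    · have : p.2 < k := by omega
      rw [horder p.2 this, mul_zero]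

lemma coeff_pow_self {R : Type*} [CommRing R] (F : PowerSeries R)
    (hF0 : constantCoeff F = 0) :
    ∀ j, coeff j (F ^ j) = (coeff 1 F) ^ j := by
  have h1 : ∀ i < 1, coeff i F = 0 := by
    intro i hi
    interval_cases i
    simpa using hF0
  intro j
  induction j with
  | zero => simp
  | succ j ih =>
    rw [pow_succ, coeff_mul]
    rw [Finset.sum_eq_single (j, 1)]
    · rw [ih, pow_succ]
    · intro p hp hne
      rw [Finset.HasAntidiagonal.mem_antidiagonal] at hp
      by_cases h : p.1 < j
      · rw [coeff_pow_zero_of_lt F 1 h1 j p.1 (by omega), zero_mul]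
      · have : p.2 = 0 := by
          rcases Nat.lt_or_ge p.1 (j+1) with h' | h'
          · exfalso; apply hne; have : p.1 = j := by omega
            ext
            · simp [this] at hp ⊢ <;> omega
            · simp [this] at hp ⊢ <;> omega
          · omega
        rw [this]; simpa using mul_eq_zero_of_right _ hF0
    · intro h; simp at h

/-- Let `R` be an integral domain, `P ∈ R[[T]]` nonzero with zero constant
term and order `k ≥ 1`, with coefficient `π_k` of `T^k`. If `F ∈ R[[T]]` has zero constant
term and coefficient of `T` equal to `c`, and `F(P(T)) = P(F(T))`, then `c·π_k = π_k·c^k`,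
and hence `c^k = c`. -/
theorem coeff_one_pow_eq_coeff_one_of_commute
    {R : Type*} [CommRing R] [IsDomain R]
    (P F : PowerSeries R) (k : ℕ) (hk : 1 ≤ k)
    (hP0 : constantCoeff P = 0)
    (horder : ∀ i < k, coeff i P = 0) (hπk : coeff k P ≠ 0)
    (hF0 : constantCoeff F = 0)
    (hcomm : F.comp P = P.comp F) :
    coeff 1 F * coeff k P = coeff k P * (coeff 1 F) ^ k ∧
      (coeff 1 F) ^ k = coeff 1 F := by
  have hc := congrArg (coeff k) hcomm
  simp only [PowerSeries.comp, coeff_mk] at hc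
  have hL : ∑ j ∈ Finset.range (k + 1), coeff j F * coeff k (P ^ j)
      = coeff 1 F * coeff k P := by
    rw [Finset.sum_eq_single 1]
    · simp
    · intro j hj hne
      rcases Nat.eq_zero_or_pos j with rfl | hj1
      · have : coeff k (1 : PowerSeries R) = 0 := by
          rw [coeff_one, if_neg (by omega)]
        simp [this]
      · have h2 : 2 ≤ j := by omega
        have : k < j * k := by nlinarith
        rw [coeff_pow_zero_of_lt P k horder j k this, mul_zero]
    · intro h; exfalso; apply h; simp; omega
  have hR : ∑ j ∈ Finset.range (k + 1), coeff j P * coeff k (F ^ j)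
      = coeff k P * (coeff 1 F) ^ k := by
    rw [Finset.sum_eq_single k]
    · rw [coeff_pow_self F hF0]
    · intro j hj hne
      have : j < k := by simp at hj; omega
      rw [horder j this, zero_mul]
    · intro h; simp at h
  rw [hL, hR] at hc
  refine ⟨hc, ?_⟩
  have : coeff k P * ((coeff 1 F) ^ k - coeff 1 F) = 0 := by
    rw [mul_sub, ← hc]; ring
  rcases mul_eq_zero.mp this with h | h
  · exact absurd h hπk
  · exact sub_eq_zero.mp h
end

section
/- Let P(T) ∈ 𝒪_E[[T]] be a power series with zero constant term whose reduction modulo 𝔪_E equals T^q (i.e. every coefficient of P(T) − T^q lies in 𝔪_E). Suppose there exists F(T) ∈ 𝒪_E[[T]] with zero constant term such that F(P(T)) = P(F(T)), the reduction of F modulo 𝔪_E is not equal to T, and the coefficient of T in F lies in 1 + 2p·𝒪_E. Then the coefficient of T in P is nonzero, i.e. P'(0) ≠ 0. -/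
open PowerSeries

section AuxLemmas

open Finset

set_option linter.unusedSectionVars false

lemma coeff_comp_aux {R : Type*} [CommRing R] (f g : PowerSeries R) (n : ℕ) :
    coeff n (f.comp g) = ∑ k ∈ Finset.range (n + 1), coeff k f * coeff n (g ^ k) := by
  rw [PowerSeries.comp, PowerSeries.coeff_mk]


lemma coeff_pow_eq_zero_aux {R : Type*} [CommRing R] (g : PowerSeries R) (e : ℕ)
    (hg : ∀ j, j < e → coeff j g = 0) :
    ∀ (k n : ℕ), n < e * k → coeff n (g ^ k) = 0 := by
  intro k
  induction k with
  | zero => intro n hn; simp at hn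
  | succ k ih =>
    intro n hn
    rw [pow_succ, PowerSeries.coeff_mul]
    apply Finset.sum_eq_zero
    rintro ⟨x, y⟩ hxy
    rw [Finset.HasAntidiagonal.mem_antidiagonal] at hxy
    rcases lt_or_ge x (e * k) with hx | hx
    · rw [ih x hx, zero_mul]
    · have hy : y < e := by
        have : e * (k + 1) = e * k + e := by ring
        omega
      rw [hg y hy, mul_zero]

lemma coeff_self_pow_aux {R : Type*} [CommRing R] (g : PowerSeries R)
    (hg : constantCoeff g = 0) :
    ∀ k : ℕ, coeff k (g ^ k) = (coeff 1 g) ^ k := by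
  have h0 : ∀ j, j < 1 → coeff j g = 0 := by
    intro j hj
    interval_cases j
    simpa using hg
  intro k
  induction k with
  | zero => simp
  | succ k ih =>
    rw [pow_succ, PowerSeries.coeff_mul, Finset.sum_eq_single (k, 1)]
    · rw [ih, pow_succ]
    · rintro ⟨x, y⟩ hxy hne
      rw [Finset.HasAntidiagonal.mem_antidiagonal] at hxy
      rcases lt_or_ge x k with hx | hx
      · rw [coeff_pow_eq_zero_aux g 1 h0 k x (by omega), zero_mul]
      · rcases Nat.eq_or_lt_of_le hx with rfl | hx'
        · exact absurd (by omega : y = 1) (by simpa using fun h => hne (by simp [h]))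
        · have : y = 0 := by omega
          subst this
          rw [h0 0 (by omega), mul_zero]
    · intro hmem
      simp at hmem

section Test
variable {E : Type*} [Field E] [CharZero E]
variable (P F : PowerSeries E) (d m : ℕ)
variable (hd2 : 2 ≤ d) (hm2 : 2 ≤ m)
variable (hdmin : ∀ i, i < d → coeff i P = 0)
variable (hF0 : constantCoeff F = 0)

include hd2 hm2 in
-- the key coefficient computation for F^i at degree N = d+m-1,
-- where F ≡ X mod degree m
lemma coeff_pow_aux2 (hFX : ∀ j, j < m → coeff j F = coeff j X)
    (i : ℕ) (hid : d ≤ i) (hiN : i ≤ d + m - 1) :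
    coeff (d + m - 1) (F ^ i)
      = (if i = d + m - 1 then 1 else 0)
        + (if i = d then (d : E) * coeff m F else 0) := by
  classical
  set N := d + m - 1 with hN
  set G := F - X with hG
  have hGlow : ∀ j, j < m → coeff j G = 0 := by
    intro j hj
    rw [hG, map_sub, hFX j hj, sub_self]
  have hGm : coeff m G = coeff m F := by
    rw [hG, map_sub, PowerSeries.coeff_X, if_neg (by omega), sub_zero]
  have hF' : F ^ i = (X + G) ^ i := by rw [hG]; ring_nf
  rw [hF', add_pow, map_sum]
  have hterm : ∀ s ∈ Finset.range (i + 1),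
      coeff N (X ^ s * G ^ (i - s) * ((i.choose s : ℕ) : PowerSeries E))
        = (if s = i then (if i = N then 1 else 0) else 0)
          + (if s = i - 1 then (if i = d then (d : E) * coeff m F else 0) else 0) := by
    intro s hs
    rw [Finset.mem_range] at hs
    have hsle : s ≤ i := by omega
    have hterm1 : coeff N (X ^ s * G ^ (i - s) * ((i.choose s : ℕ) : PowerSeries E))
        = coeff (N - s) (G ^ (i - s)) * (i.choose s : E) := by
      rw [← map_natCast (PowerSeries.C (R := E)) (i.choose s), PowerSeries.coeff_mul_C,
        mul_comm (X ^ s) (G ^ (i - s)), PowerSeries.coeff_mul_X_pow', if_pos (by omega)]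
    rw [hterm1]
    rcases Nat.lt_or_ge s (i - 1) with hs2 | hs2
    · -- t = i - s ≥ 2
      have ht2 : 2 ≤ i - s := by omega
      have hmt : m + (i - s) ≤ m * (i - s) := Nat.add_le_mul hm2 ht2
      rw [coeff_pow_eq_zero_aux G m hGlow (i - s) (N - s) (by omega), zero_mul,
        if_neg (by omega), if_neg (by omega)]
      simp
    · rcases Nat.eq_or_lt_of_le hs2 with hs3 | hs3
      · -- s = i - 1, t = 1
        have hsi : s ≠ i := by omega
        rw [if_neg hsi, if_pos hs3.symm, zero_add]
        have hpow1 : i - s = 1 := by omega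
        rw [hpow1, pow_one]
        have hch : i.choose s = i := by
          rw [← hs3]
          have h1 := Nat.choose_symm (show 1 ≤ i by omega)
          rw [h1, Nat.choose_one_right]
        rcases eq_or_ne i d with rfl | hid'
        · rw [if_pos rfl]
          have hNs : N - s = m := by omega
          rw [hNs, hGm, hch]
          ring
        · rw [if_neg hid']
          have hNs : N - s < m := by omega
          rw [hGlow (N - s) hNs, zero_mul]
      · -- s = i, t = 0
        have hsi : s = i := by omega
        subst hsi
        rw [Nat.sub_self, pow_zero, Nat.choose_self, Nat.cast_one, mul_one,
          PowerSeries.coeff_one]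
        by_cases hiN' : s = N
        · rw [if_pos (show N - s = 0 by omega), if_pos (rfl : s = s), if_pos hiN',
            if_neg (show ¬ s = s - 1 by omega), add_zero]
        · rw [if_neg (show ¬ N - s = 0 by omega), if_pos (rfl : s = s), if_neg hiN',
            if_neg (show ¬ s = s - 1 by omega), add_zero]
  rw [Finset.sum_congr rfl hterm, Finset.sum_add_distrib,
    Finset.sum_ite_eq' (Finset.range (i + 1)) i,
    Finset.sum_ite_eq' (Finset.range (i + 1)) (i - 1),
    if_pos (Finset.mem_range.mpr (by omega)), if_pos (Finset.mem_range.mpr (by omega))]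


include hd2 hm2 hdmin in
lemma coeff_comp_right_aux (hFX : ∀ j, j < m → coeff j F = coeff j X) :
    coeff (d + m - 1) (P.comp F)
      = coeff (d + m - 1) P + coeff d P * ((d : E) * coeff m F) := by
  classical
  set N := d + m - 1 with hN
  rw [coeff_comp_aux]
  have hpoint : ∀ i ∈ Finset.range (N + 1),
      coeff i P * coeff N (F ^ i)
        = (if i = N then coeff N P else 0)
          + (if i = d then coeff d P * ((d : E) * coeff m F) else 0) := by
    intro i hi
    rw [Finset.mem_range] at hi
    have hNd : d < N := by omega
    rcases Nat.lt_or_ge i d with hid | hid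
    · rw [hdmin i hid, zero_mul, if_neg (by omega), if_neg (by omega)]
      simp
    · rw [coeff_pow_aux2 F d m hd2 hm2 hFX i hid (by omega)]
      rcases eq_or_ne i N with rfl | hiN
      · rw [if_pos rfl, if_pos rfl, if_neg (by omega), if_neg (by omega)]
        ring
      · rcases eq_or_ne i d with rfl | hid'
        · rw [if_neg hiN, if_neg hiN, if_pos rfl, if_pos rfl]
          ring
        · rw [if_neg hiN, if_neg hiN, if_neg hid', if_neg hid']
          ring
  rw [Finset.sum_congr rfl hpoint, Finset.sum_add_distrib,
    Finset.sum_ite_eq' (Finset.range (N + 1)) N,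
    Finset.sum_ite_eq' (Finset.range (N + 1)) d,
    if_pos (Finset.mem_range.mpr (by omega)), if_pos (Finset.mem_range.mpr (by omega))]

include hd2 hm2 hdmin hF0 in
lemma coeff_comp_left_aux (hF1 : coeff 1 F = 1)
    (hFX : ∀ j, j < m → coeff j F = coeff j X) :
    coeff (d + m - 1) (F.comp P) = coeff (d + m - 1) P := by
  classical
  set N := d + m - 1 with hN
  rw [coeff_comp_aux]
  rw [Finset.sum_eq_single 1]
  · rw [hF1, pow_one, one_mul]
  · intro k hk hk1
    rw [Finset.mem_range] at hk
    rcases Nat.lt_or_ge k m with hkm | hkm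
    · rcases Nat.eq_zero_or_pos k with rfl | hkpos
      · rw [PowerSeries.coeff_zero_eq_constantCoeff_apply, hF0, zero_mul]
      · rw [hFX k hkm, PowerSeries.coeff_X, if_neg hk1, zero_mul]
    · have hmt : d + k ≤ d * k := Nat.add_le_mul hd2 (by omega)
      rw [coeff_pow_eq_zero_aux P d hdmin k N (by omega), mul_zero]
  · intro h1
    exact absurd (Finset.mem_range.mpr (by omega)) h1


include hdmin hF0 in
lemma coeff_comp_d_left_aux (hd1 : 1 ≤ d) :
    coeff d (F.comp P) = coeff 1 F * coeff d P := by
  classical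
  rw [coeff_comp_aux, Finset.sum_eq_single 1]
  · rw [pow_one]
  · intro k hk hk1
    rcases Nat.eq_zero_or_pos k with rfl | hkpos
    · rw [PowerSeries.coeff_zero_eq_constantCoeff_apply, hF0, zero_mul]
    · have hk2 : 2 ≤ k := by omega
      have hlt : d * 2 ≤ d * k := Nat.mul_le_mul_left d hk2
      rw [coeff_pow_eq_zero_aux P d hdmin k d (by omega), mul_zero]
  · intro h1
    exact absurd (Finset.mem_range.mpr (by omega)) h1

include hdmin hF0 in
lemma coeff_comp_d_right_aux :
    coeff d (P.comp F) = coeff d P * (coeff 1 F) ^ d := by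
  classical
  rw [coeff_comp_aux, Finset.sum_eq_single d]
  · rw [coeff_self_pow_aux F hF0 d]
  · intro i hi hid
    rw [Finset.mem_range] at hi
    rcases Nat.lt_or_ge i d with hlt | hge
    · rw [hdmin i hlt, zero_mul]
    · omega
  · intro h1
    exact absurd (Finset.mem_range.mpr (by omega)) h1

end Test



variable {E : Type*} [NormedField E] [IsUltrametricDist E]

lemma norm_natCast_eq_aux (p : ℕ) [Fact p.Prime] [NormedAlgebra ℚ_[p] E] (n : ℕ) :
    ‖(n : E)‖ = ‖(n : ℚ_[p])‖ := by
  rw [← map_natCast (algebraMap ℚ_[p] E) n, norm_algebraMap']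

lemma norm_natCast_le_one_aux (p : ℕ) [Fact p.Prime] [NormedAlgebra ℚ_[p] E] (n : ℕ) :
    ‖(n : E)‖ ≤ 1 := by
  rw [norm_natCast_eq_aux p n]
  exact_mod_cast Padic.norm_int_le_one (n : ℤ)

lemma norm_natCast_eq_one_aux (p : ℕ) [Fact p.Prime] [NormedAlgebra ℚ_[p] E] (n : ℕ)
    (hn : ¬ p ∣ n) : ‖(n : E)‖ = 1 := by
  rw [norm_natCast_eq_aux p n]
  have h1 : ¬ ‖((n : ℤ) : ℚ_[p])‖ < 1 := by
    rw [Padic.norm_intCast_lt_one_iff]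
    exact_mod_cast hn
  have h2 : ‖((n : ℤ) : ℚ_[p])‖ ≤ 1 := Padic.norm_int_le_one _
  push_cast at h1 h2 ⊢
  linarith

lemma norm_natCast_le_aux (p : ℕ) [Fact p.Prime] [NormedAlgebra ℚ_[p] E] (n : ℕ)
    (hn : p ∣ n) : ‖(n : E)‖ ≤ ‖(p : E)‖ := by
  obtain ⟨c, rfl⟩ := hn
  push_cast
  rw [norm_mul]
  calc ‖(p : E)‖ * ‖(c : E)‖ ≤ ‖(p : E)‖ * 1 := by
        gcongr; exact norm_natCast_le_one_aux p c
    _ = ‖(p : E)‖ := mul_one _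

lemma norm_p_aux (p : ℕ) [Fact p.Prime] [NormedAlgebra ℚ_[p] E] :
    ‖(p : E)‖ = (p : ℝ)⁻¹ := by
  rw [norm_natCast_eq_aux p p, Padic.norm_p]

lemma norm_p_lt_one_aux (p : ℕ) [hp : Fact p.Prime] [NormedAlgebra ℚ_[p] E] :
    ‖(p : E)‖ < 1 := by
  rw [norm_p_aux]
  have := hp.out.two_le
  rw [inv_lt_one_iff₀]
  right
  exact_mod_cast this

lemma prime_order_aux (p : ℕ) [hp : Fact p.Prime] [NormedAlgebra ℚ_[p] E]
    {ℓ : ℕ} (hl : ℓ.Prime) {b : E} (hb : b ^ ℓ = 1)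
    (hnorm : ‖b - 1‖ ≤ ‖(2 : E)‖ * ‖(p : E)‖) : b = 1 := by
  by_contra hne
  set w := b - 1 with hwdef
  have hw0 : w ≠ 0 := sub_ne_zero.mpr hne
  have hwpos : 0 < ‖w‖ := norm_pos_iff.mpr hw0
  have h2le : ‖(2 : E)‖ ≤ 1 := norm_natCast_le_one_aux p 2
  have hplt : ‖(p : E)‖ < 1 := norm_p_lt_one_aux p
  have hppos : 0 < ‖(p : E)‖ := by
    rw [norm_p_aux]
    have := hp.out.two_le
    positivity
  have hwle : ‖w‖ ≤ ‖(2:E)‖ * ‖(p:E)‖ := hnorm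
  have hwlt : ‖w‖ < 1 := by
    calc ‖w‖ ≤ ‖(2:E)‖ * ‖(p:E)‖ := hnorm
      _ ≤ 1 * ‖(p:E)‖ := by gcongr
      _ < 1 := by simpa using hplt
  -- expand (1+w)^ℓ = 1
  have hkey : ∑ k ∈ range (ℓ + 1), w ^ k * 1 ^ (ℓ - k) * (ℓ.choose k : E) = 1 := by
    rw [← add_pow]
    have hb1 : w + 1 = b := by rw [hwdef]; ring
    rw [hb1, hb]
  simp only [one_pow, mul_one] at hkey
  obtain ⟨l, rfl⟩ : ∃ l, ℓ = l + 1 := ⟨ℓ - 1, (Nat.succ_pred_eq_of_pos hl.pos).symm⟩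
  rw [Finset.sum_range_succ'] at hkey
  simp only [pow_zero, Nat.choose_zero_right, Nat.cast_one, one_mul] at hkey
  have hkey2 : ∑ k ∈ range (l + 1), w ^ (k + 1) * ((l+1).choose (k+1) : E) = 0 := by
    linear_combination hkey
  rw [Finset.sum_range_succ', Nat.choose_one_right] at hkey2
  simp only [pow_zero, one_mul, zero_add] at hkey2
  set S := ∑ k ∈ range l, w ^ k * ((l+1).choose (k+2) : E) with hSdef
  have hmul : ∑ k ∈ range l, w ^ (k + 1 + 1) * ((l+1).choose (k+1+1) : E) = w ^ 2 * S := by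
    rw [hSdef, Finset.mul_sum]
    apply Finset.sum_congr rfl
    intro k _
    ring
  -- hkey2 : Σ w^(k+1+1) C(k+1+1) + w^1 * (l+1) = 0
  have hl1 : ((l + 1 : ℕ) : E) * w = - (w ^ 2 * S) := by
    rw [← hmul]
    push_cast
    push_cast at hkey2
    linear_combination hkey2
  -- norms
  have hnl : ‖((l + 1 : ℕ) : E)‖ * ‖w‖ = ‖w‖ ^ 2 * ‖S‖ := by
    have := congrArg norm hl1
    rwa [norm_neg, norm_mul, norm_mul, norm_pow] at this
  -- bound on ‖S‖
  by_cases hcase : (l + 1) = p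
  · -- ℓ = p
    subst hcase
    have hl1 : 1 ≤ l := by
      have := hl.two_le
      omega
    have hSb : ‖S‖ ≤ max ‖((l + 1 : ℕ) : E)‖ (‖w‖ ^ (l - 1)) := by
      apply IsUltrametricDist.norm_sum_le_of_forall_le_of_nonneg
      · positivity
      · intro k hk
        rw [Finset.mem_range] at hk
        rw [norm_mul, norm_pow]
        rcases Nat.lt_or_ge (k + 2) (l + 1) with hkp | hkp
        · have hd : (l + 1) ∣ (l+1).choose (k + 2) := hl.dvd_choose_self (by omega) hkp
          calc ‖w‖ ^ k * ‖((l+1).choose (k+2) : E)‖ ≤ 1 * ‖((l + 1 : ℕ) : E)‖ := by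
                apply mul_le_mul
                · exact pow_le_one₀ (norm_nonneg w) hwlt.le
                · exact norm_natCast_le_aux (l+1) _ hd
                · positivity
                · norm_num
            _ = ‖((l + 1 : ℕ) : E)‖ := one_mul _
            _ ≤ _ := le_max_left _ _
        · have hk2 : k + 2 = l + 1 := by omega
          have hk' : k = l - 1 := by omega
          rw [hk2, Nat.choose_self, Nat.cast_one, norm_one, mul_one, hk']
          exact le_max_right _ _
    have hmain : ‖((l + 1 : ℕ) : E)‖ * ‖w‖ ≤ ‖w‖ ^ 2 * max ‖((l + 1 : ℕ) : E)‖ (‖w‖ ^ (l - 1)) := by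
      rw [hnl]; gcongr
    rcases max_cases ‖((l + 1 : ℕ) : E)‖ (‖w‖ ^ (l - 1)) with ⟨hmax, _⟩ | ⟨hmax, _⟩
    · rw [hmax] at hmain
      nlinarith [mul_pos (mul_pos hppos hwpos) (sub_pos.mpr hwlt), hmain]
    · rw [hmax] at hmain
      have hpow : ‖w‖ ^ 2 * ‖w‖ ^ (l - 1) = ‖w‖ ^ l * ‖w‖ := by
        rw [← pow_add, ← pow_succ]
        congr 1
        omega
      rw [hpow] at hmain
      have hwp : ‖((l + 1 : ℕ) : E)‖ ≤ ‖w‖ ^ l := le_of_mul_le_mul_right hmain hwpos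
      rcases eq_or_ne l 1 with rfl | hlne
      · -- p = 2
        have h2eq : ‖(2 : E)‖ = ‖((1 + 1 : ℕ) : E)‖ := by norm_num
        rw [h2eq] at hwle
        rw [pow_one] at hwp
        nlinarith [hplt, hppos, hwp, hwle]
      · -- p odd
        have h2 : ‖(2:E)‖ = 1 := by
          apply norm_natCast_eq_one_aux (l+1) 2
          intro hdvd
          have := Nat.le_of_dvd (by norm_num) hdvd
          omega
        rw [h2, one_mul] at hwle
        have hb1 : ‖w‖ ^ l ≤ ‖((l + 1 : ℕ) : E)‖ ^ 2 := by
          calc ‖w‖ ^ l ≤ ‖w‖ ^ 2 := by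
                apply pow_le_pow_of_le_one (norm_nonneg w) hwlt.le
                omega
            _ ≤ ‖((l + 1 : ℕ) : E)‖ ^ 2 := by gcongr
        nlinarith [le_trans hwp hb1, hplt, hppos]
  · -- ℓ ≠ p : ‖ℓ‖ = 1
    have hnd : ¬ p ∣ (l + 1) := by
      intro hdvd
      exact hcase ((Nat.prime_dvd_prime_iff_eq hp.out hl).mp hdvd).symm
    have hl1n : ‖((l + 1 : ℕ) : E)‖ = 1 := norm_natCast_eq_one_aux p _ hnd
    rw [hl1n, one_mul] at hnl
    have hSb : ‖S‖ ≤ 1 := by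
      apply IsUltrametricDist.norm_sum_le_of_forall_le_of_nonneg zero_le_one
      intro k hk
      rw [norm_mul, norm_pow]
      calc ‖w‖ ^ k * ‖((l+1).choose (k+2) : E)‖ ≤ 1 * 1 := by
            apply mul_le_mul
            · exact pow_le_one₀ (norm_nonneg w) hwlt.le
            · exact norm_natCast_le_one_aux p _
            · positivity
            · norm_num
        _ = 1 := one_mul 1
    nlinarith [hnl, hSb, hwlt, hwpos]

lemma torsion_one_aux (p : ℕ) [hp : Fact p.Prime] [NormedAlgebra ℚ_[p] E]
    {a : E} (ha : ‖a - 1‖ ≤ ‖(2 : E)‖ * ‖(p : E)‖) :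
    ∀ n : ℕ, 1 ≤ n → a ^ n = 1 → a = 1 := by
  have h2le : ‖(2 : E)‖ ≤ 1 := norm_natCast_le_one_aux p 2
  have hplt : ‖(p : E)‖ < 1 := norm_p_lt_one_aux p
  have hanorm : ‖a‖ ≤ 1 := by
    have h1 : a = (a - 1) + 1 := by ring
    calc ‖a‖ = ‖(a - 1) + 1‖ := by rw [← h1]
      _ ≤ max ‖a - 1‖ ‖(1:E)‖ := IsUltrametricDist.norm_add_le_max _ _
      _ ≤ 1 := by
          apply max_le _ (by simp)
          calc ‖a - 1‖ ≤ ‖(2:E)‖ * ‖(p:E)‖ := ha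
            _ ≤ 1 * 1 := by
                apply mul_le_mul h2le hplt.le (norm_nonneg _) zero_le_one
            _ = 1 := one_mul 1
  intro n
  induction n using Nat.strong_induction_on with
  | _ n ih =>
    intro hn han
    rcases eq_or_lt_of_le hn with h1 | h2
    · rw [← h1, pow_one] at han
      exact han
    · set ℓ := n.minFac with hldef
      have hprime : ℓ.Prime := Nat.minFac_prime (by omega)
      have hdvd : ℓ ∣ n := Nat.minFac_dvd n
      have hb : (a ^ (n / ℓ)) ^ ℓ = 1 := by
        rw [← pow_mul, Nat.div_mul_cancel hdvd]
        exact han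
      have hgeom : a ^ (n / ℓ) - 1 = (∑ i ∈ range (n / ℓ), a ^ i) * (a - 1) :=
        (geom_sum_mul a (n / ℓ)).symm
      have hbnorm : ‖a ^ (n / ℓ) - 1‖ ≤ ‖(2:E)‖ * ‖(p:E)‖ := by
        rw [hgeom, norm_mul]
        have hS : ‖∑ i ∈ range (n / ℓ), a ^ i‖ ≤ 1 := by
          apply IsUltrametricDist.norm_sum_le_of_forall_le_of_nonneg zero_le_one
          intro i _
          rw [norm_pow]
          exact pow_le_one₀ (norm_nonneg a) hanorm
        calc ‖∑ i ∈ range (n / ℓ), a ^ i‖ * ‖a - 1‖ ≤ 1 * ‖a - 1‖ := by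
              apply mul_le_mul_of_nonneg_right hS (norm_nonneg _)
          _ = ‖a - 1‖ := one_mul _
          _ ≤ _ := ha
      have hone : a ^ (n / ℓ) = 1 := prime_order_aux p hprime hb hbnorm
      have hlt : n / ℓ < n := Nat.div_lt_self (by omega) hprime.one_lt
      have hge : 1 ≤ n / ℓ := Nat.one_le_div_iff hprime.pos |>.mpr (Nat.minFac_le (by omega))
      exact ih (n / ℓ) hlt hge hone

end AuxLemmas

/-- Let `P ∈ 𝒪_E[[T]]` have zero constant term and reduction `T^q` modulo
`𝔪_E`. If there is an `F ∈ 𝒪_E[[T]]` with zero constant term such that `F(P(T)) = P(F(T))`,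
the reduction of `F` modulo `𝔪_E` is not `T`, and the coefficient of `T` in `F` lies in
`1 + 2p·𝒪_E`, then `P'(0) ≠ 0`. -/

theorem coeff_one_ne_zero_of_commuting_series
    {p : ℕ} [Fact p.Prime] (E : Type*) [NormedField E] [IsUltrametricDist E]
    [NormedAlgebra ℚ_[p] E] [FiniteDimensional ℚ_[p] E]
    (q : ℕ) (hq : q = Nat.card ((ringOfIntegers E) ⧸ (maxIdeal E)))
    (P : PowerSeries E) (hPint : ∀ n, ‖coeff n P‖ ≤ 1)
    (hP0 : constantCoeff P = 0)
    (hPred : ∀ n, ‖coeff n (P - X ^ q)‖ < 1)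
    (F : PowerSeries E) (hFint : ∀ n, ‖coeff n F‖ ≤ 1)
    (hF0 : constantCoeff F = 0)
    (hcomm : F.comp P = P.comp F)
    (hFred : ¬ ∀ n, ‖coeff n (F - X)‖ < 1)
    (hF1 : ∃ y : E, ‖y‖ ≤ 1 ∧ coeff 1 F = 1 + 2 * p * y) :
    coeff 1 P ≠ 0 := by
  intro h
  classical
  haveI : CharZero E := charZero_of_injective_algebraMap (algebraMap ℚ_[p] E).injective
  have h2le : ‖(2 : E)‖ ≤ 1 := norm_natCast_le_one_aux p 2
  have hplt : ‖(p : E)‖ < 1 := norm_p_lt_one_aux p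
  obtain ⟨y, hy, hay⟩ := hF1
  set a := coeff 1 F with ha
  have ha1norm : ‖a - 1‖ ≤ ‖(2 : E)‖ * ‖(p : E)‖ := by
    have h1 : a - 1 = 2 * (p : E) * y := by rw [hay]; ring
    rw [h1, norm_mul, norm_mul]
    calc ‖(2:E)‖ * ‖(p:E)‖ * ‖y‖ ≤ ‖(2:E)‖ * ‖(p:E)‖ * 1 := by gcongr
      _ = ‖(2:E)‖ * ‖(p:E)‖ := mul_one _
  have hr1 : ‖(2:E)‖ * ‖(p:E)‖ < 1 := by
    calc ‖(2:E)‖ * ‖(p:E)‖ ≤ 1 * ‖(p:E)‖ := by gcongr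
      _ < 1 := by simpa using hplt
  have ha0 : a ≠ 0 := by
    intro h0
    rw [h0, zero_sub, norm_neg, norm_one] at ha1norm
    linarith
  have hq2 : coeff q P ≠ 0 := by
    intro h0
    have h1 := hPred q
    rw [map_sub, h0, PowerSeries.coeff_X_pow, if_pos rfl, zero_sub, norm_neg, norm_one] at h1
    exact lt_irrefl 1 h1
  have hex : ∃ n, coeff n P ≠ 0 := ⟨q, hq2⟩
  set d := Nat.find hex with hdd
  have hd : coeff d P ≠ 0 := Nat.find_spec hex
  have hdmin : ∀ i, i < d → coeff i P = 0 := fun i hi => not_not.mp (Nat.find_min hex hi)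
  have hd0 : coeff 0 P = 0 := by
    rw [PowerSeries.coeff_zero_eq_constantCoeff_apply]; exact hP0
  have hdne0 : d ≠ 0 := by intro h'; rw [h'] at hd; exact hd hd0
  have hdne1 : d ≠ 1 := by intro h'; rw [h'] at hd; exact hd h
  have hd2 : 2 ≤ d := by omega
  have heq1 : a * coeff d P = coeff d P * a ^ d := by
    rw [ha, ← coeff_comp_d_left_aux P F d hdmin hF0 (by omega),
      ← coeff_comp_d_right_aux P F d hdmin hF0, hcomm]
  have heq2 : a = a ^ d := by
    rw [mul_comm] at heq1
    exact mul_left_cancel₀ hd heq1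
  have heq3 : a ^ (d - 1) = 1 := by
    have hsucc : a ^ d = a ^ (d - 1) * a := by
      rw [← pow_succ]
      congr 1
      omega
    apply mul_right_cancel₀ ha0
    rw [one_mul, ← hsucc, ← heq2]
  have haone : a = 1 := torsion_one_aux p ha1norm (d - 1) (by omega) heq3
  have hFX : ∀ n, coeff n F = coeff n X := by
    intro n
    induction n using Nat.strong_induction_on with
    | _ n ih =>
      rcases Nat.lt_or_ge n 2 with hn2 | hn2
      · interval_cases n
        · rw [PowerSeries.coeff_zero_eq_constantCoeff_apply, hF0,
            PowerSeries.coeff_zero_eq_constantCoeff_apply, PowerSeries.constantCoeff_X]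
        · rw [← ha, haone, PowerSeries.coeff_one_X]
      · have hL := coeff_comp_left_aux P F d n hd2 hn2 hdmin hF0 (by rw [← ha]; exact haone) ih
        have hR := coeff_comp_right_aux P F d n hd2 hn2 hdmin ih
        rw [hcomm, hR] at hL
        have hz : coeff d P * ((d : E) * coeff n F) = 0 := by
          linear_combination hL
        have hdE : (d : E) ≠ 0 := Nat.cast_ne_zero.mpr hdne0
        rcases mul_eq_zero.mp hz with h1 | h1
        · exact absurd h1 hd
        · rcases mul_eq_zero.mp h1 with h2 | h2
          · exact absurd h2 hdE
          · rw [h2, PowerSeries.coeff_X, if_neg (by omega)]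
  have hFeq : F = X := PowerSeries.ext hFX
  exact hFred (fun n => by rw [hFeq, sub_self, map_zero, norm_zero]; norm_num)
end

section
/- Let P(T) = Σ_{k≥1} π_k T^k ∈ 𝒪_E[[T]] be a power series with zero constant term such that π_1 ≠ 0 and π_1 ∈ 𝔪_E. Then there exists a unique power series A(T) = Σ_{k≥1} a_k T^k ∈ E[[T]] with zero constant term such that a_1 = 1 and A(P(T)) = π_1·A(T); moreover π_1^{k−1}·a_k ∈ 𝒪_E for every k ≥ 1. -/
open PowerSeries

/- Auxiliary lemmas -/

lemma aux_coeff_pow_lt {R : Type*} [CommRing R] {P : PowerSeries R}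
    (hP0 : constantCoeff P = 0) : ∀ k m, m < k → coeff m (P ^ k) = 0 := by
  intro k
  induction k with
  | zero => intro m hm; omega
  | succ k ih =>
    intro m hm
    rw [pow_succ, coeff_mul]
    apply Finset.sum_eq_zero
    rintro ⟨i, j⟩ hij
    rw [Finset.HasAntidiagonal.mem_antidiagonal] at hij
    by_cases hik : i < k
    · rw [ih i hik, zero_mul]
    · have hj : j = 0 := by omega
      subst hj
      rw [coeff_zero_eq_constantCoeff, hP0, mul_zero]

lemma aux_coeff_pow_self {R : Type*} [CommRing R] {P : PowerSeries R}
    (hP0 : constantCoeff P = 0) : ∀ k, coeff k (P ^ k) = (coeff 1 P) ^ k := by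
  intro k
  induction k with
  | zero => simp
  | succ k ih =>
    rw [pow_succ, coeff_mul]
    rw [Finset.sum_eq_single (k, 1)]
    · simp [ih, pow_succ]
    · rintro ⟨i, j⟩ hij hne
      rw [Finset.HasAntidiagonal.mem_antidiagonal] at hij
      by_cases hik : i < k
      · rw [aux_coeff_pow_lt hP0 k i hik, zero_mul]
      · have hj : j = 0 := by
          rcases Nat.lt_or_ge i (k + 1) with h | h
          · exfalso; apply hne
            have : i = k := by omega
            subst this
            have : j = 1 := by omega
            subst this; rfl
          · omega
        subst hj
        rw [coeff_zero_eq_constantCoeff, hP0, mul_zero]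
    · intro h
      exfalso
      exact h (Finset.HasAntidiagonal.mem_antidiagonal.mpr rfl)

lemma aux_coeff_pow_norm_le {E : Type*} [NormedField E] [IsUltrametricDist E]
    {P : PowerSeries E} (h : ∀ n, ‖coeff n P‖ ≤ 1) :
    ∀ k n, ‖coeff n (P ^ k)‖ ≤ 1 := by
  intro k
  induction k with
  | zero =>
    intro n
    rw [pow_zero, coeff_one]
    split <;> simp
  | succ k ih =>
    intro n
    rw [pow_succ, coeff_mul]
    apply IsUltrametricDist.norm_sum_le_of_forall_le_of_nonneg zero_le_one
    rintro ⟨i, j⟩ _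
    rw [norm_mul]
    exact mul_le_one₀ (ih i) (norm_nonneg _) (h j)

/-- The coefficients of the logarithm, defined by recursion. -/
noncomputable def logA {E : Type*} [Field E] (P : PowerSeries E) : ℕ → E
  | 0 => 0
  | 1 => 1
  | (n + 2) =>
      -(∑ k ∈ (Finset.range (n + 2)).attach,
          logA P k.1 * coeff (n + 2) (P ^ (k.1 : ℕ))) /
        ((coeff 1 P) ^ (n + 2) - coeff 1 P)
decreasing_by exact Finset.mem_range.mp k.2

/-- Let `P = Σ_{k≥1} π_k T^k ∈ 𝒪_E[[T]]` with `π₁ ≠ 0` and `π₁ ∈ 𝔪_E`.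
Then there is a unique `A = Σ_{k≥1} a_k T^k ∈ E[[T]]` with zero constant term, `a₁ = 1` and
`A(P(T)) = π₁·A(T)`; moreover `π₁^{k-1}·a_k ∈ 𝒪_E` for all `k ≥ 1`. -/
theorem existsUnique_logarithm
    {p : ℕ} [Fact p.Prime] (E : Type*) [NormedField E] [IsUltrametricDist E]
    [NormedAlgebra ℚ_[p] E] [FiniteDimensional ℚ_[p] E]
    (P : PowerSeries E) (hPint : ∀ n, ‖coeff n P‖ ≤ 1)
    (hP0 : constantCoeff P = 0)
    (hπ1 : coeff 1 P ≠ 0) (hπ1m : ‖coeff 1 P‖ < 1) :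
    (∃! A : PowerSeries E, constantCoeff A = 0 ∧ coeff 1 A = 1 ∧
        A.comp P = C (coeff 1 P) * A) ∧
      ∀ A : PowerSeries E, constantCoeff A = 0 → coeff 1 A = 1 →
        A.comp P = C (coeff 1 P) * A →
        ∀ k : ℕ, 1 ≤ k → ‖(coeff 1 P) ^ (k - 1) * coeff k A‖ ≤ 1 := by
  set π : E := coeff 1 P with hπdef
  -- the denominator is nonzero
  have hd : ∀ n : ℕ, 2 ≤ n → π ^ n - π ≠ 0 := by
    intro n hn h
    have h1 : π ^ (n - 1) * π = 1 * π := by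
      rw [one_mul, ← pow_succ]
      have : n - 1 + 1 = n := by omega
      rw [this]
      exact sub_eq_zero.mp h
    have h2 : π ^ (n - 1) = 1 := mul_right_cancel₀ hπ1 h1
    have h3 : ‖π ^ (n - 1)‖ < 1 := by
      rw [norm_pow]
      exact pow_lt_one₀ (norm_nonneg _) hπ1m (by omega)
    rw [h2, norm_one] at h3
    exact lt_irrefl 1 h3
  -- key recursion satisfied by any solution
  have key : ∀ A : PowerSeries E, constantCoeff A = 0 → coeff 1 A = 1 →
      A.comp P = C π * A → ∀ n, 2 ≤ n →
      coeff n A = -(∑ k ∈ Finset.range n, coeff k A * coeff n (P ^ k)) /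
        (π ^ n - π) := by
    intro A hA0 hA1 hAeq n hn
    have h := congrArg (coeff n) hAeq
    rw [PowerSeries.comp, coeff_mk, coeff_C_mul, Finset.sum_range_succ,
      aux_coeff_pow_self hP0 n] at h
    rw [eq_div_iff (hd n hn)]
    linear_combination h
  -- the functional equation in coefficient form
  have coeff_eq : ∀ A : PowerSeries E,
      A.comp P = C π * A ↔
      ∀ n, (∑ k ∈ Finset.range (n + 1), coeff k A * coeff n (P ^ k)) =
        π * coeff n A := by
    intro A
    constructor
    · intro h n
      have := congrArg (coeff n) h
      rwa [PowerSeries.comp, coeff_mk, coeff_C_mul] at this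
    · intro h
      ext n
      rw [PowerSeries.comp, coeff_mk, coeff_C_mul]
      exact h n
  -- the candidate solution
  have hl0 : logA P 0 = 0 := by rw [logA]
  have hl1 : logA P 1 = 1 := by rw [logA]
  set A₀ : PowerSeries E := PowerSeries.mk (logA P) with hA₀def
  have hA₀c : ∀ n, coeff n A₀ = logA P n := fun n => coeff_mk n _
  have hA₀0 : constantCoeff A₀ = 0 := by
    rw [← coeff_zero_eq_constantCoeff, hA₀c 0, hl0]
  have hA₀1 : coeff 1 A₀ = 1 := by rw [hA₀c 1, hl1]
  have hA₀rec : ∀ n, 2 ≤ n → logA P n =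
      -(∑ k ∈ Finset.range n, logA P k * coeff n (P ^ k)) / (π ^ n - π) := by
    intro n hn
    obtain ⟨m, rfl⟩ : ∃ m, n = m + 2 := ⟨n - 2, by omega⟩
    rw [logA]
    rw [Finset.sum_attach (Finset.range (m + 2)) (fun k => logA P k * coeff (m + 2) (P ^ k))]
  have hA₀eq : A₀.comp P = C π * A₀ := by
    rw [coeff_eq A₀]
    intro n
    match n with
    | 0 => simp [hA₀c, hl0]
    | 1 =>
      rw [Finset.sum_range_succ, Finset.sum_range_one, hA₀c 0, hA₀c 1, hl0, hl1]
      simp [hπdef]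
    | (m + 2) =>
      rw [Finset.sum_range_succ, aux_coeff_pow_self hP0 (m + 2)]
      simp only [hA₀c]
      have hh' := (eq_div_iff (hd (m + 2) (by omega))).mp (hA₀rec (m + 2) (by omega))
      linear_combination hh'
  -- the norm bound
  have bound : ∀ A : PowerSeries E, constantCoeff A = 0 → coeff 1 A = 1 →
      A.comp P = C π * A →
      ∀ k : ℕ, 1 ≤ k → ‖π ^ (k - 1) * coeff k A‖ ≤ 1 := by
    intro A hA0 hA1 hAeq
    intro k hk
    induction k using Nat.strong_induction_on with
    | _ k ih =>
    match k, hk with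
    | 1, _ => simp [hA1]
    | (m + 2), _ =>
      set n := m + 2 with hn
      have hrec := key A hA0 hA1 hAeq n (by omega)
      have hπn : ‖π ^ n - π‖ = ‖π‖ := by
        have hn1 : n - 1 + 1 = n := by omega
        have : π ^ n - π = π * (π ^ (n - 1) - 1) := by
          rw [mul_sub, mul_one, ← pow_succ', hn1]
        rw [this, norm_mul]
        have h1 : ‖π ^ (n - 1) - 1‖ = 1 := by
          rw [sub_eq_add_neg,
            IsUltrametricDist.norm_add_eq_max_of_norm_ne_norm]
          · rw [norm_neg, norm_one, norm_pow]
            rw [max_eq_right]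
            exact le_of_lt (pow_lt_one₀ (norm_nonneg _) hπ1m (by omega))
          · rw [norm_neg, norm_one, norm_pow]
            exact ne_of_lt (pow_lt_one₀ (norm_nonneg _) hπ1m (by omega))
        rw [h1, mul_one]
      -- compute the norm
      have hπpos : (0 : ℝ) < ‖π‖ := norm_pos_iff.mpr hπ1
      have hSbound : ‖π ^ (n - 2) *
          (∑ k ∈ Finset.range n, coeff k A * coeff n (P ^ k))‖ ≤ 1 := by
        rw [Finset.mul_sum]
        apply IsUltrametricDist.norm_sum_le_of_forall_le_of_nonneg zero_le_one
        intro j hj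
        rw [Finset.mem_range] at hj
        rcases Nat.eq_zero_or_pos j with hj0 | hj1
        · subst hj0
          rw [coeff_zero_eq_constantCoeff, hA0]
          simp
        · have hsplit : (n : ℕ) - 2 = (j - 1) + (n - 1 - j) := by omega
          have e1 : ‖π‖ ^ (j - 1) * ‖coeff j A‖ ≤ 1 := by
            have := ih j hj hj1
            rwa [norm_mul, norm_pow] at this
          have e2 : ‖π‖ ^ (n - 1 - j) ≤ 1 :=
            pow_le_one₀ (norm_nonneg _) (le_of_lt hπ1m)
          have e3 : ‖coeff n (P ^ j)‖ ≤ 1 := aux_coeff_pow_norm_le hPint j n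
          rw [norm_mul, norm_mul, norm_pow, hsplit]
          calc ‖π‖ ^ (j - 1 + (n - 1 - j)) * (‖coeff j A‖ * ‖coeff n (P ^ j)‖)
              = (‖π‖ ^ (j - 1) * ‖coeff j A‖) *
                  (‖π‖ ^ (n - 1 - j) * ‖coeff n (P ^ j)‖) := by
                rw [pow_add]; ring
            _ ≤ 1 := mul_le_one₀ e1 (by positivity)
                (mul_le_one₀ e2 (norm_nonneg _) e3)
      rw [hrec, norm_mul, norm_div, norm_neg, hπn, norm_pow]
      have hn2 : n - 2 + 1 = n - 1 := by omega
      have h1 : ‖π‖ ^ (n - 1) = ‖π‖ * ‖π‖ ^ (n - 2) := by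
        rw [← pow_succ', hn2]
      have heq : ‖π‖ ^ (n - 1) *
          (‖∑ k ∈ Finset.range n, coeff k A * coeff n (P ^ k)‖ / ‖π‖) =
          ‖π‖ ^ (n - 2) * ‖∑ k ∈ Finset.range n, coeff k A * coeff n (P ^ k)‖ := by
        rw [h1]
        field_simp
      rw [heq]
      calc ‖π‖ ^ (n - 2) * ‖∑ k ∈ Finset.range n, coeff k A * coeff n (P ^ k)‖
          = ‖π ^ (n - 2) * (∑ k ∈ Finset.range n, coeff k A * coeff n (P ^ k))‖ := by
            rw [norm_mul, norm_pow]
        _ ≤ 1 := hSbound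
  constructor
  · refine ⟨A₀, ⟨hA₀0, hA₀1, hA₀eq⟩, ?_⟩
    rintro B ⟨hB0, hB1, hBeq⟩
    ext n
    rw [hA₀c]
    induction n using Nat.strong_induction_on with
    | _ n ih =>
    match n with
    | 0 => rw [coeff_zero_eq_constantCoeff, hB0, hl0]
    | 1 => rw [hB1, hl1]
    | (m + 2) =>
      rw [key B hB0 hB1 hBeq (m + 2) (by omega), hA₀rec (m + 2) (by omega)]
      congr 1
      · congr 1
        apply Finset.sum_congr rfl
        intro k hk
        rw [Finset.mem_range] at hk
        rw [ih k hk]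
  · exact bound
end

section
/- Let P(T) = Σ_{k≥1} π_k T^k ∈ 𝒪_E[[T]] be a power series with zero constant term such that π_1 ≠ 0 and π_1 ∈ 𝔪_E, and let A(T) ∈ E[[T]] be the unique power series with zero constant term, coefficient of T equal to 1, and A(P(T)) = π_1·A(T). Then for every F(T) ∈ E[[T]] with zero constant term satisfying F(P(T)) = P(F(T)), one has A(F(T)) = c·A(T), where c is the coefficient of T in F. -/
open PowerSeries

namespace CompAux

variable {R : Type*} [CommRing R]

lemma coeff_comp (f g : PowerSeries R) (n : ℕ) :
    coeff n (f.comp g) = ∑ k ∈ Finset.range (n + 1), coeff k f * coeff n (g ^ k) :=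
  PowerSeries.coeff_mk _ _

lemma coeff_pow_of_lt {g : PowerSeries R} (hg : constantCoeff g = 0) :
    ∀ k n : ℕ, n < k → coeff n (g ^ k) = 0 := by
  intro k
  induction k with
  | zero => intro n h; omega
  | succ k ih =>
    intro n h
    rw [pow_succ, PowerSeries.coeff_mul]
    apply Finset.sum_eq_zero
    intro p hp
    rw [Finset.HasAntidiagonal.mem_antidiagonal] at hp
    by_cases h1 : p.1 < k
    · rw [ih p.1 h1, zero_mul]
    · have h2 : p.2 = 0 := by omega
      rw [h2, PowerSeries.coeff_zero_eq_constantCoeff, hg, mul_zero]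

lemma coeff_pow_self {g : PowerSeries R} (hg : constantCoeff g = 0) :
    ∀ n : ℕ, coeff n (g ^ n) = (coeff 1 g) ^ n := by
  intro n
  induction n with
  | zero => simp
  | succ n ih =>
    rw [pow_succ, PowerSeries.coeff_mul]
    rw [Finset.sum_eq_single_of_mem ((n, 1) : ℕ × ℕ)
      (by rw [Finset.HasAntidiagonal.mem_antidiagonal])]
    · rw [ih, pow_succ]
    · intro b hb hne
      rw [Finset.HasAntidiagonal.mem_antidiagonal] at hb
      by_cases h1 : b.1 < n
      · rw [coeff_pow_of_lt hg n b.1 h1, zero_mul]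
      · have h2 : b.2 = 0 := by
          rcases Nat.lt_or_ge b.1 (n + 1) with h | h
          · exfalso; apply hne
            have : b.1 = n := by omega
            have : b.2 = 1 := by omega
            exact Prod.ext ‹b.1 = n› ‹b.2 = 1›
          · omega
        rw [h2, PowerSeries.coeff_zero_eq_constantCoeff, hg, mul_zero]

lemma coeff_eval₂ {g : PowerSeries R} (hg : constantCoeff g = 0) (Q : Polynomial R) (n : ℕ) :
    coeff n (Q.eval₂ C g) = ∑ i ∈ Finset.range (n + 1), Q.coeff i * coeff n (g ^ i) := by
  set N := max (n + 1) (Q.natDegree + 1) with hN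
  have hdeg : Q.natDegree < N := lt_of_lt_of_le (Nat.lt_succ_self _) (le_max_right _ _)
  rw [Polynomial.eval₂_eq_sum_range' C hdeg g, map_sum]
  have hterm : ∀ i ∈ Finset.range N,
      coeff n (C (Q.coeff i) * g ^ i) = Q.coeff i * coeff n (g ^ i) := by
    intro i _; rw [PowerSeries.coeff_C_mul]
  rw [Finset.sum_congr rfl hterm]
  symm
  apply Finset.sum_subset
  · intro i hi
    rw [Finset.mem_range] at hi ⊢
    exact lt_of_lt_of_le hi (le_max_left _ _)
  · intro i _ hi
    rw [Finset.mem_range, not_lt] at hi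
    rw [coeff_pow_of_lt hg i n (by omega), mul_zero]

lemma coeff_comp_eq_eval₂ {g : PowerSeries R} (hg : constantCoeff g = 0)
    (f : PowerSeries R) {n m : ℕ} (h : n < m) :
    coeff n (f.comp g) = coeff n ((trunc m f).eval₂ C g) := by
  rw [coeff_eval₂ hg, coeff_comp]
  apply Finset.sum_congr rfl
  intro i hi
  rw [Finset.mem_range] at hi
  rw [PowerSeries.coeff_trunc, if_pos (by omega)]

lemma coeff_mul_congr {a a' b b' : PowerSeries R} {n : ℕ}
    (h1 : ∀ i ≤ n, coeff i a = coeff i a')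
    (h2 : ∀ i ≤ n, coeff i b = coeff i b') :
    coeff n (a * b) = coeff n (a' * b') := by
  rw [PowerSeries.coeff_mul, PowerSeries.coeff_mul]
  apply Finset.sum_congr rfl
  intro p hp
  rw [Finset.HasAntidiagonal.mem_antidiagonal] at hp
  rw [h1 p.1 (by omega), h2 p.2 (by omega)]

lemma mul_comp {g : PowerSeries R} (hg : constantCoeff g = 0) (f f' : PowerSeries R) :
    (f * f').comp g = f.comp g * f'.comp g := by
  ext n
  rw [coeff_comp_eq_eval₂ hg (f * f') (Nat.lt_succ_self n)]
  have key : coeff n (f.comp g * f'.comp g) =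
      coeff n (((trunc (n + 1) f).eval₂ C g) * ((trunc (n + 1) f').eval₂ C g)) := by
    apply coeff_mul_congr
    · intro i hi; exact coeff_comp_eq_eval₂ hg f (by omega)
    · intro i hi; exact coeff_comp_eq_eval₂ hg f' (by omega)
  rw [key, ← Polynomial.eval₂_mul, coeff_eval₂ hg, coeff_eval₂ hg]
  apply Finset.sum_congr rfl
  intro i hi
  rw [Finset.mem_range] at hi
  congr 1
  rw [Polynomial.coeff_mul, PowerSeries.coeff_trunc, if_pos (by omega),
    PowerSeries.coeff_mul]
  apply Finset.sum_congr rfl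
  intro p hp
  rw [Finset.HasAntidiagonal.mem_antidiagonal] at hp
  rw [PowerSeries.coeff_trunc, if_pos (by omega), PowerSeries.coeff_trunc, if_pos (by omega)]

lemma one_comp (g : PowerSeries R) : (1 : PowerSeries R).comp g = 1 := by
  ext n
  rw [coeff_comp]
  rw [Finset.sum_eq_single_of_mem 0 (Finset.mem_range.2 (Nat.succ_pos n))]
  · simp
  · intro b _ hb
    rw [PowerSeries.coeff_one, if_neg hb, zero_mul]

lemma pow_comp {g : PowerSeries R} (hg : constantCoeff g = 0) (f : PowerSeries R) (k : ℕ) :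
    (f ^ k).comp g = (f.comp g) ^ k := by
  induction k with
  | zero => simpa using one_comp g
  | succ k ih => rw [pow_succ, mul_comp hg, ih, pow_succ]

lemma C_mul_comp (a : R) (f g : PowerSeries R) :
    (C a * f).comp g = C a * f.comp g := by
  ext n
  rw [coeff_comp, PowerSeries.coeff_C_mul, coeff_comp, Finset.mul_sum]
  apply Finset.sum_congr rfl
  intro k _
  rw [PowerSeries.coeff_C_mul, mul_assoc]

lemma sub_comp (f f' g : PowerSeries R) :
    (f - f').comp g = f.comp g - f'.comp g := by
  ext n
  rw [map_sub, coeff_comp, coeff_comp, coeff_comp, ← Finset.sum_sub_distrib]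
  apply Finset.sum_congr rfl
  intro k _
  rw [map_sub, sub_mul]

lemma comp_assoc {g h : PowerSeries R} (hg : constantCoeff g = 0)
    (hh : constantCoeff h = 0) (f : PowerSeries R) :
    (f.comp g).comp h = f.comp (g.comp h) := by
  ext n
  rw [coeff_comp, coeff_comp]
  have lhs : ∀ j ∈ Finset.range (n + 1),
      coeff j (f.comp g) * coeff n (h ^ j) =
      ∑ k ∈ Finset.range (n + 1), coeff k f * coeff j (g ^ k) * coeff n (h ^ j) := by
    intro j hj
    rw [Finset.mem_range] at hj
    rw [coeff_comp, Finset.sum_mul]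
    apply Finset.sum_subset
    · intro k hk; rw [Finset.mem_range] at hk ⊢; omega
    · intro k _ hk
      rw [Finset.mem_range, not_lt] at hk
      rw [coeff_pow_of_lt hg k j (by omega), mul_zero, zero_mul]
  rw [Finset.sum_congr rfl lhs, Finset.sum_comm]
  apply Finset.sum_congr rfl
  intro k _
  rw [← pow_comp hh, coeff_comp, Finset.mul_sum]
  apply Finset.sum_congr rfl
  intro j _
  rw [mul_assoc]

lemma constantCoeff_comp {g : PowerSeries R} (hg : constantCoeff g = 0)
    (f : PowerSeries R) (hf : constantCoeff f = 0) :
    constantCoeff (f.comp g) = 0 := by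
  rw [← PowerSeries.coeff_zero_eq_constantCoeff] at *
  rw [coeff_comp]
  simp [hf]

end CompAux

/-- Let `P = Σ_{k≥1} π_k T^k ∈ 𝒪_E[[T]]` with `π₁ ≠ 0`, `π₁ ∈ 𝔪_E`, and
let `A ∈ E[[T]]` be the unique power series with zero constant term, coefficient of `T` equal
to `1`, and `A(P(T)) = π₁·A(T)`. Then every `F ∈ E[[T]]` with zero constant term satisfying
`F(P(T)) = P(F(T))` satisfies `A(F(T)) = c·A(T)` where `c` is the coefficient of `T` in `F`. -/
theorem logarithm_linearizes_commuting_series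
    {p : ℕ} [Fact p.Prime] (E : Type*) [NormedField E] [IsUltrametricDist E]
    [NormedAlgebra ℚ_[p] E] [FiniteDimensional ℚ_[p] E]
    (P : PowerSeries E) (hPint : ∀ n, ‖coeff n P‖ ≤ 1)
    (hP0 : constantCoeff P = 0)
    (hπ1 : coeff 1 P ≠ 0) (hπ1m : ‖coeff 1 P‖ < 1)
    (A : PowerSeries E) (hA0 : constantCoeff A = 0) (hA1 : coeff 1 A = 1)
    (hAP : A.comp P = C (coeff 1 P) * A)
    (F : PowerSeries E) (hF0 : constantCoeff F = 0)
    (hcomm : F.comp P = P.comp F) :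
    A.comp F = C (coeff 1 F) * A := by
  open CompAux in
  set π : E := coeff 1 P with hπ
  set c : E := coeff 1 F with hc
  -- π^n ≠ π for n ≥ 2
  have hne : ∀ n : ℕ, 2 ≤ n → π ^ n ≠ π := by
    intro n hn heq
    have hnorm : ‖π‖ ^ n = ‖π‖ := by rw [← norm_pow, heq]
    have h0 : 0 < ‖π‖ := norm_pos_iff.2 hπ1
    have hlt : ‖π‖ ^ n < ‖π‖ ^ 1 := pow_lt_pow_right_of_lt_one₀ h0 hπ1m (by omega)
    rw [pow_one, hnorm] at hlt
    exact lt_irrefl _ hlt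
  set B : PowerSeries E := A.comp F with hB
  -- B ∘ P = π • B
  have hBP : B.comp P = C π * B := by
    rw [hB, comp_assoc hF0 hP0, hcomm, ← comp_assoc hP0 hF0, hAP, C_mul_comp]
  -- coefficients of B in degrees 0 and 1
  have hB0 : coeff 0 B = 0 := by
    rw [hB, coeff_comp]
    simp [← PowerSeries.coeff_zero_eq_constantCoeff] at hA0 ⊢
    simp [hA0]
  have hB1 : coeff 1 B = c := by
    rw [hB, coeff_comp, Finset.sum_range_succ, Finset.sum_range_one]
    rw [pow_zero, pow_one, hA1, PowerSeries.coeff_one, if_neg one_ne_zero, mul_zero,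
      zero_add, one_mul, hc]
  -- D := B - c • A vanishes
  set D : PowerSeries E := B - C c * A with hD
  have hDP : D.comp P = C π * D := by
    rw [hD, sub_comp, hBP, C_mul_comp, hAP, mul_sub, ← mul_assoc, ← mul_assoc,
      mul_comm (C c) (C π)]
  have hD0 : coeff 0 D = 0 := by
    rw [hD, map_sub, hB0, PowerSeries.coeff_C_mul,
      PowerSeries.coeff_zero_eq_constantCoeff, hA0, mul_zero, sub_zero]
  have hD1 : coeff 1 D = 0 := by
    rw [hD, map_sub, hB1, PowerSeries.coeff_C_mul, hA1, mul_one, sub_self]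
  have hDzero : D = 0 := by
    ext n
    induction n using Nat.strong_induction_on with
    | _ n ih =>
      rcases Nat.lt_or_ge n 2 with h2 | h2
      · interval_cases n
        · simpa using hD0
        · simpa using hD1
      · have hcn := congrArg (coeff n) hDP
        rw [coeff_comp, PowerSeries.coeff_C_mul] at hcn
        rw [Finset.sum_eq_single_of_mem n (Finset.self_mem_range_succ n)] at hcn
        · rw [coeff_pow_self hP0] at hcn
          have : coeff n D * (π ^ n - π) = 0 := by
            rw [mul_sub, hcn, mul_comm]; ring
          rcases mul_eq_zero.1 this with h | h
          · simpa using h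
          · exact absurd (sub_eq_zero.1 h) (hne n h2)
        · intro b hb hbn
          rw [Finset.mem_range] at hb
          have : coeff b D = 0 := by
            have := ih b (by omega)
            simpa using this
          rw [this, zero_mul]
  have : B = C c * A := by
    have := sub_eq_zero.1 hDzero
    exact this
  simpa [hB, hc] using this
end

section
/- Let P(T) ∈ 𝒪_E[[T]] be a power series with zero constant term whose reduction modulo 𝔪_E equals T^q. Regard 𝒪_E[[T]] as an algebra over 𝒪_E[[S]] via the 𝒪_E-algebra homomorphism 𝒪_E[[S]] → 𝒪_E[[T]] sending S to P(T) (formal substitution). Then 𝒪_E[[T]] is a free 𝒪_E[[S]]-module of rank q; in fact 1, T, T², …, T^{q−1} is a basis. -/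
open PowerSeries

section Aux

open IsUltrametricDist Finset

lemma mem_ringOfIntegers_iff {E : Type*} [NormedField E] [IsUltrametricDist E] {x : E} :
    x ∈ ringOfIntegers E ↔ ‖x‖ ≤ 1 := Iff.rfl

lemma mem_maxIdeal_iff {E : Type*} [NormedField E] [IsUltrametricDist E]
    {x : ringOfIntegers E} : x ∈ maxIdeal E ↔ ‖(x : E)‖ < 1 := Iff.rfl

/-- In a proper ultrametric field, the norms of elements of the open unit ball are
uniformly bounded away from `1`. -/
lemma exists_rho (E : Type*) [NormedField E] [IsUltrametricDist E] [ProperSpace E] :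
    ∃ ρ : ℝ, 0 < ρ ∧ ρ < 1 ∧ ∀ x : E, ‖x‖ < 1 → ‖x‖ ≤ ρ := by
  by_contra hcon
  push_neg at hcon
  have key : ∀ x : E, ‖x‖ < 1 → ∃ y : E, ‖y‖ < 1 ∧ max 2⁻¹ ‖x‖ < ‖y‖ := by
    intro x hx
    obtain ⟨y, hy1, hy2⟩ := hcon (max 2⁻¹ ‖x‖)
      (lt_of_lt_of_le (by norm_num) (le_max_left _ _)) (max_lt (by norm_num) hx)
    exact ⟨y, hy1, hy2⟩
  choose F hF1 hF2 using key
  obtain ⟨u, hu⟩ : ∃ u : ℕ → {x : E // ‖x‖ < 1},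
      ∀ n, max 2⁻¹ ‖(u n : E)‖ < ‖(u (n + 1) : E)‖ := by
    refine ⟨fun n => Nat.rec ⟨0, by simp⟩ (fun _ ih => ⟨F ih.1 ih.2, hF1 ih.1 ih.2⟩) n,
      fun n => ?_⟩
    exact hF2 _ _
  have hmono : StrictMono (fun n => ‖(u n : E)‖) :=
    strictMono_nat_of_lt_succ fun n => lt_of_le_of_lt (le_max_right _ _) (hu n)
  have hhalf : ∀ n, 2⁻¹ < ‖(u (n + 1) : E)‖ := fun n =>
    lt_of_le_of_lt (le_max_left _ _) (hu n)
  have hsep : ∀ a b : ℕ, a ≠ b → 2⁻¹ < ‖(u (a + 1) : E) - (u (b + 1) : E)‖ := by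
    intro a b hab
    have hne : ‖(u (a + 1) : E)‖ ≠ ‖(-(u (b + 1) : E))‖ := by
      rw [norm_neg]
      exact fun h => hab (by simpa using hmono.injective (a₁ := a + 1) (a₂ := b + 1) h)
    rw [sub_eq_add_neg, norm_add_eq_max_of_norm_ne_norm hne, norm_neg]
    exact lt_max_of_lt_left (hhalf a)
  have hK : IsCompact (Metric.closedBall (0 : E) 1) := isCompact_closedBall 0 1
  have hmem : ∀ n, ((u (n + 1) : E)) ∈ Metric.closedBall (0 : E) 1 := fun n => by
    simpa [Metric.mem_closedBall, dist_zero_right] using (u (n + 1)).2.le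
  obtain ⟨x, -, φ, hφ, hconv⟩ := hK.tendsto_subseq hmem
  rw [Metric.tendsto_atTop] at hconv
  obtain ⟨N, hN⟩ := hconv 4⁻¹ (by norm_num)
  have h1 := hN N le_rfl
  have h2 := hN (N + 1) (Nat.le_succ N)
  have hdist : dist ((u (φ N + 1) : E)) ((u (φ (N + 1) + 1) : E)) ≤ 2⁻¹ := by
    calc dist ((u (φ N + 1) : E)) ((u (φ (N + 1) + 1) : E))
        ≤ dist ((u (φ N + 1) : E)) x + dist x ((u (φ (N + 1) + 1) : E)) := dist_triangle _ _ _
      _ ≤ 4⁻¹ + 4⁻¹ := by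
          refine add_le_add h1.le ?_
          rw [dist_comm]; exact h2.le
      _ = 2⁻¹ := by norm_num
  have := hsep (φ N) (φ (N + 1)) (ne_of_lt (hφ (Nat.lt_succ_self N)))
  rw [dist_eq_norm] at hdist
  linarith

variable {E : Type*} [NormedField E] [IsUltrametricDist E]

/-- All coefficients of `f` have norm at most `c`. -/
def BddCoeff (c : ℝ) (f : PowerSeries (ringOfIntegers E)) : Prop :=
  ∀ n, ‖((coeff n f : ringOfIntegers E) : E)‖ ≤ c

lemma bddCoeff_one (f : PowerSeries (ringOfIntegers E)) : BddCoeff 1 f :=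
  fun n => (coeff n f).2

lemma bddCoeff_neg {c : ℝ} {f : PowerSeries (ringOfIntegers E)} (hf : BddCoeff c f) :
    BddCoeff c (-f) := by
  intro n
  rw [map_neg]
  push_cast
  rw [norm_neg]
  exact hf n

lemma bddCoeff_add {c : ℝ} {f g : PowerSeries (ringOfIntegers E)}
    (hf : BddCoeff c f) (hg : BddCoeff c g) : BddCoeff c (f + g) := by
  intro n
  rw [map_add]
  push_cast
  exact le_trans (norm_add_le_max _ _) (max_le (hf n) (hg n))

lemma bddCoeff_sub {c : ℝ} {f g : PowerSeries (ringOfIntegers E)}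
    (hf : BddCoeff c f) (hg : BddCoeff c g) : BddCoeff c (f - g) := by
  rw [sub_eq_add_neg]
  exact bddCoeff_add hf (bddCoeff_neg hg)

lemma bddCoeff_sum {ι : Type*} {c : ℝ} (hc : 0 ≤ c) (s : Finset ι)
    {f : ι → PowerSeries (ringOfIntegers E)} (hf : ∀ i ∈ s, BddCoeff c (f i)) :
    BddCoeff c (∑ i ∈ s, f i) := by
  intro n
  rw [map_sum]
  rw [AddSubmonoidClass.coe_finset_sum]
  exact norm_sum_le_of_forall_le_of_nonneg hc fun i hi => hf i hi n

lemma bddCoeff_mul {a b : ℝ} (ha : 0 ≤ a) (hb : 0 ≤ b)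
    {f g : PowerSeries (ringOfIntegers E)} (hf : BddCoeff a f) (hg : BddCoeff b g) :
    BddCoeff (a * b) (f * g) := by
  intro n
  rw [coeff_mul, AddSubmonoidClass.coe_finset_sum]
  refine norm_sum_le_of_forall_le_of_nonneg (mul_nonneg ha hb) fun i _ => ?_
  push_cast
  rw [norm_mul]
  exact mul_le_mul (hf _) (hg _) (norm_nonneg _) ha

lemma bddCoeff_comp {c : ℝ} (hc : 0 ≤ c) {f : PowerSeries (ringOfIntegers E)}
    (hf : BddCoeff c f) (P : PowerSeries (ringOfIntegers E)) : BddCoeff c (f.comp P) := by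
  intro n
  rw [PowerSeries.comp, coeff_mk, AddSubmonoidClass.coe_finset_sum]
  refine norm_sum_le_of_forall_le_of_nonneg hc fun k _ => ?_
  push_cast
  rw [norm_mul]
  calc ‖((coeff k f : ringOfIntegers E) : E)‖ *
        ‖((coeff n (P ^ k) : ringOfIntegers E) : E)‖
      ≤ c * 1 := mul_le_mul (hf k) (coeff n (P ^ k)).2 (norm_nonneg _) hc
    _ = c := mul_one c

lemma comp_zero' (P : PowerSeries (ringOfIntegers E)) :
    (0 : PowerSeries (ringOfIntegers E)).comp P = 0 := by
  ext n
  simp [PowerSeries.comp]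

lemma comp_add' (f g P : PowerSeries (ringOfIntegers E)) :
    (f + g).comp P = f.comp P + g.comp P := by
  ext n
  simp [PowerSeries.comp, add_mul, Finset.sum_add_distrib]

lemma comp_sub' (f g P : PowerSeries (ringOfIntegers E)) :
    (f - g).comp P = f.comp P - g.comp P := by
  ext n
  simp [PowerSeries.comp, sub_mul, Finset.sum_sub_distrib]

lemma coeff_comp_X_pow {q : ℕ} (hq : 0 < q) (g : PowerSeries (ringOfIntegers E)) (n : ℕ) :
    coeff n (g.comp ((X : PowerSeries (ringOfIntegers E)) ^ q)) =
      if q ∣ n then coeff (n / q) g else 0 := by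
  rw [PowerSeries.comp, coeff_mk]
  have hterm : ∀ k, coeff n (((X : PowerSeries (ringOfIntegers E)) ^ q) ^ k)
      = if n = q * k then 1 else 0 := by
    intro k
    rw [← pow_mul, coeff_X_pow]
  by_cases hd : q ∣ n
  · obtain ⟨m, rfl⟩ := hd
    rw [if_pos ⟨m, rfl⟩, Nat.mul_div_cancel_left m hq]
    rw [Finset.sum_eq_single m]
    · rw [hterm, if_pos rfl, mul_one]
    · intro k _ hkm
      rw [hterm, if_neg fun h => hkm (Nat.eq_of_mul_eq_mul_left hq h).symm, mul_zero]
    · intro hnot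
      exact absurd (Finset.mem_range.mpr (Nat.lt_succ_of_le (Nat.le_mul_of_pos_left m hq)))
        hnot
  · rw [if_neg hd, Finset.sum_eq_zero]
    intro k _
    rw [hterm, if_neg fun h => hd ⟨k, h⟩, mul_zero]

lemma coeff_assemble {q : ℕ} (hq : 0 < q) (h : Fin q → PowerSeries (ringOfIntegers E)) (n : ℕ) :
    coeff n
        (∑ j : Fin q, (h j).comp ((X : PowerSeries (ringOfIntegers E)) ^ q) * X ^ (j : ℕ)) =
      coeff (n / q) (h ⟨n % q, Nat.mod_lt n hq⟩) := by
  rw [map_sum]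
  have hterm : ∀ j : Fin q,
      coeff n ((h j).comp ((X : PowerSeries (ringOfIntegers E)) ^ q)
          * X ^ (j : ℕ)) =
        if j = (⟨n % q, Nat.mod_lt n hq⟩ : Fin q)
          then coeff (n / q) (h j) else 0 := by
    intro j
    rw [coeff_mul_X_pow']
    by_cases hj : (j : ℕ) ≤ n
    · rw [if_pos hj, coeff_comp_X_pow hq]
      by_cases hdvd : q ∣ (n - (j : ℕ))
      · obtain ⟨t, ht⟩ := hdvd
        have hn : n = q * t + (j : ℕ) := by omega
        have hjmod : (j : ℕ) = n % q := by
          rw [hn, Nat.mul_add_mod, Nat.mod_eq_of_lt j.2]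
        have hjeq : j = (⟨n % q, Nat.mod_lt n hq⟩ : Fin q) := Fin.ext hjmod
        have hdm := Nat.div_add_mod n q
        have hsum : q * t + (j : ℕ) = q * (n / q) + (j : ℕ) := by
          rw [← hn, hjmod]
          exact hdm.symm
        have hdiv : (n - (j : ℕ)) / q = n / q := by
          rw [ht, Nat.mul_div_cancel_left t hq]
          exact Nat.eq_of_mul_eq_mul_left hq (Nat.add_right_cancel hsum)
        rw [if_pos ⟨t, ht⟩, if_pos hjeq, hdiv]
      · rw [if_neg hdvd, if_neg]
        intro hc
        apply hdvd
        have hjmod : (j : ℕ) = n % q := by rw [hc]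
        have hdm := Nat.div_add_mod n q
        exact ⟨n / q, Nat.sub_eq_of_eq_add (by rw [hjmod]; exact hdm.symm)⟩
    · rw [if_neg hj, if_neg]
      intro hc
      apply hj
      rw [hc]
      exact Nat.mod_le n q
  rw [Finset.sum_congr rfl fun j _ => hterm j, Finset.sum_ite_eq' Finset.univ]
  simp

/-- The `i`-th "qslice" of a power series with respect to base-`q` decomposition. -/
noncomputable def qslice (q i : ℕ) (f : PowerSeries (ringOfIntegers E)) :
    PowerSeries (ringOfIntegers E) :=
  PowerSeries.mk fun m => coeff (m * q + i) f

lemma bddCoeff_qslice {c : ℝ} {f : PowerSeries (ringOfIntegers E)} (hf : BddCoeff c f)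
    (q i : ℕ) : BddCoeff c (qslice q i f) := by
  intro n
  rw [qslice, coeff_mk]
  exact hf _

lemma qslice_assemble {q : ℕ} (hq : 0 < q) (h : Fin q → PowerSeries (ringOfIntegers E))
    (i : Fin q) :
    qslice q (i : ℕ)
        (∑ j : Fin q, (h j).comp ((X : PowerSeries (ringOfIntegers E)) ^ q) * X ^ (j : ℕ)) =
      h i := by
  ext m
  rw [qslice, coeff_mk, coeff_assemble hq]
  have h1 : (m * q + (i : ℕ)) % q = (i : ℕ) := by
    rw [mul_comm, Nat.mul_add_mod, Nat.mod_eq_of_lt i.2]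
  have h2 : (m * q + (i : ℕ)) / q = m := by
    rw [mul_comm, Nat.mul_add_div hq, Nat.div_eq_of_lt i.2, add_zero]
  have h3 : (⟨(m * q + (i : ℕ)) % q, Nat.mod_lt _ hq⟩ : Fin q) = i := Fin.ext h1
  rw [h2, h3]

lemma decomp {q : ℕ} (hq : 0 < q) (f : PowerSeries (ringOfIntegers E)) :
    f = ∑ i : Fin q,
        (qslice q (i : ℕ) f).comp ((X : PowerSeries (ringOfIntegers E)) ^ q) * X ^ (i : ℕ) := by
  ext n
  rw [coeff_assemble hq]
  rw [qslice, coeff_mk]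
  have hidx : n / q * q + ((⟨n % q, Nat.mod_lt n hq⟩ : Fin q) : ℕ) = n :=
    Nat.div_add_mod' n q
  rw [hidx]

lemma bddCoeff_comp_sub {q : ℕ} {c ρ : ℝ} (hc : 0 ≤ c) (hρ : 0 ≤ ρ)
    {g P : PowerSeries (ringOfIntegers E)}
    (hg : BddCoeff c g) (hP : BddCoeff ρ (P - X ^ q)) :
    BddCoeff (c * ρ) (g.comp ((X : PowerSeries (ringOfIntegers E)) ^ q) - g.comp P) := by
  have hXP : BddCoeff ρ ((X : PowerSeries (ringOfIntegers E)) ^ q - P) := by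
    have := bddCoeff_neg hP
    rwa [neg_sub] at this
  intro n
  have hco : coeff n (g.comp ((X : PowerSeries (ringOfIntegers E)) ^ q)
        - g.comp P) =
      ∑ k ∈ Finset.range (n + 1), coeff k g *
        coeff n (((X : PowerSeries (ringOfIntegers E)) ^ q) ^ k - P ^ k) := by
    rw [map_sub]
    simp only [PowerSeries.comp, coeff_mk]
    rw [← Finset.sum_sub_distrib]
    exact Finset.sum_congr rfl fun k _ => by rw [map_sub, mul_sub]
  rw [hco, AddSubmonoidClass.coe_finset_sum]
  refine norm_sum_le_of_forall_le_of_nonneg (mul_nonneg hc hρ) fun k _ => ?_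
  push_cast
  rw [norm_mul]
  refine mul_le_mul (hg k) ?_ (norm_nonneg _) hc
  have hfact : ((X : PowerSeries (ringOfIntegers E)) ^ q) ^ k - P ^ k =
      (∑ i ∈ Finset.range k, ((X : PowerSeries (ringOfIntegers E)) ^ q) ^ i * P ^ (k - 1 - i)) *
        ((X : PowerSeries (ringOfIntegers E)) ^ q - P) := (geom_sum₂_mul _ _ k).symm
  rw [hfact]
  have := bddCoeff_mul zero_le_one hρ
    (bddCoeff_one (∑ i ∈ Finset.range k,
      ((X : PowerSeries (ringOfIntegers E)) ^ q) ^ i * P ^ (k - 1 - i))) hXP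
  rw [one_mul] at this
  exact this n

lemma coeff_eq_zero_of_forall_bdd {ρ : ℝ} (hρ0 : 0 ≤ ρ) (hρ1 : ρ < 1)
    {x : ringOfIntegers E} (h : ∀ K : ℕ, ‖(x : E)‖ ≤ ρ ^ K) : x = 0 := by
  have hlim : Filter.Tendsto (fun K : ℕ => ρ ^ K) Filter.atTop (nhds 0) :=
    tendsto_pow_atTop_nhds_zero_of_lt_one hρ0 hρ1
  have h0 : ‖(x : E)‖ ≤ 0 := ge_of_tendsto' hlim h
  have : (x : E) = 0 := norm_le_zero_iff.mp h0
  exact Subtype.ext this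

end Aux

/-- Let `P ∈ 𝒪_E[[T]]` have zero constant term and reduction `T^q` modulo
`𝔪_E`. Viewing `𝒪_E[[T]]` as an `𝒪_E[[S]]`-algebra via `S ↦ P(T)`, the ring `𝒪_E[[T]]` is a
free `𝒪_E[[S]]`-module of rank `q` with basis `1, T, …, T^{q-1}`: every `f ∈ 𝒪_E[[T]]` has a
unique expression `f = Σ_{i<q} g_i(P(T))·T^i` with `g_i ∈ 𝒪_E[[S]]`. -/
theorem free_of_rank_q_over_subst
    {p : ℕ} [Fact p.Prime] (E : Type*) [NormedField E] [IsUltrametricDist E]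
    [NormedAlgebra ℚ_[p] E] [FiniteDimensional ℚ_[p] E]
    (q : ℕ) (hq : q = Nat.card ((ringOfIntegers E) ⧸ (maxIdeal E)))
    (P : PowerSeries (ringOfIntegers E))
    (hP0 : constantCoeff P = 0)
    (hPred : ∀ n, coeff n (P - X ^ q) ∈ maxIdeal E) :
    ∀ f : PowerSeries (ringOfIntegers E),
      ∃! g : Fin q → PowerSeries (ringOfIntegers E),
        f = ∑ i : Fin q, (g i).comp P * X ^ (i : ℕ) := by
  haveI : ProperSpace E := FiniteDimensional.proper ℚ_[p] E
  haveI : CompleteSpace E := FiniteDimensional.complete ℚ_[p] E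
  have hq0 : 0 < q := by
    rcases Nat.eq_zero_or_pos q with h0 | h0
    · exfalso
      have hm := hPred 0
      rw [mem_maxIdeal_iff] at hm
      have hco : coeff 0 (P - X ^ q) = -1 := by
        rw [h0, pow_zero, map_sub, coeff_zero_eq_constantCoeff_apply, hP0]
        simp
      rw [hco] at hm
      simp at hm
    · exact h0
  obtain ⟨ρ, hρ0, hρ1, hρbound⟩ := exists_rho E
  have hQ : BddCoeff ρ (P - X ^ q) := fun n => hρbound _ ((mem_maxIdeal_iff).mp (hPred n))
  intro f
  obtain ⟨r, hr0, hrs⟩ : ∃ r : ℕ → PowerSeries (ringOfIntegers E), r 0 = f ∧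
      ∀ k, r (k + 1) = r k - ∑ i : Fin q, ((qslice q (i : ℕ) (r k)).comp P) * X ^ (i : ℕ) :=
    ⟨fun k => Nat.rec f (fun _ rk =>
        rk - ∑ i : Fin q, ((qslice q (i : ℕ) rk).comp P) * X ^ (i : ℕ)) k,
      rfl, fun _ => rfl⟩
  have hralt : ∀ k, r (k + 1) = ∑ i : Fin q,
      ((qslice q (i : ℕ) (r k)).comp ((X : PowerSeries (ringOfIntegers E)) ^ q)
        - (qslice q (i : ℕ) (r k)).comp P) * X ^ (i : ℕ) := by
    intro k
    rw [hrs k]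
    calc r k - ∑ i : Fin q, ((qslice q (i : ℕ) (r k)).comp P) * X ^ (i : ℕ)
        = (∑ i : Fin q, (qslice q (i : ℕ) (r k)).comp
              ((X : PowerSeries (ringOfIntegers E)) ^ q) * X ^ (i : ℕ))
            - ∑ i : Fin q, ((qslice q (i : ℕ) (r k)).comp P) * X ^ (i : ℕ) := by
          rw [← decomp hq0 (r k)]
      _ = _ := by
          rw [← Finset.sum_sub_distrib]
          exact Finset.sum_congr rfl fun i _ => (sub_mul _ _ _).symm
  have hrB : ∀ k, BddCoeff (ρ ^ k) (r k) := by
    intro k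
    induction k with
    | zero => rw [hr0, pow_zero]; exact bddCoeff_one f
    | succ k ih =>
      rw [hralt k, pow_succ]
      refine bddCoeff_sum (mul_nonneg (pow_nonneg hρ0.le k) hρ0.le) _ fun i _ => ?_
      have h1 := bddCoeff_comp_sub (pow_nonneg hρ0.le k) hρ0.le
        (bddCoeff_qslice ih q (i : ℕ)) hQ
      have h2 := bddCoeff_mul (mul_nonneg (pow_nonneg hρ0.le k) hρ0.le) zero_le_one h1
        (bddCoeff_one ((X : PowerSeries (ringOfIntegers E)) ^ (i : ℕ)))
      rwa [mul_one] at h2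
  have he : ∀ (i : ℕ) (m k : ℕ),
      ‖((coeff m (qslice q i (r k)) : ringOfIntegers E) : E)‖ ≤ ρ ^ k :=
    fun i m k => bddCoeff_qslice (hrB k) q i m
  have hsummable : ∀ (i : ℕ) (m : ℕ),
      Summable (fun k =>
        ((coeff m (qslice q i (r k)) : ringOfIntegers E) : E)) :=
    fun i m => Summable.of_norm_bounded (summable_geometric_of_lt_one hρ0.le hρ1) (he i m)
  have hbnd : ∀ (i : ℕ) (m : ℕ),
      ‖∑' k, ((coeff m (qslice q i (r k)) : ringOfIntegers E) : E)‖ ≤ 1 :=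
    fun i m => IsUltrametricDist.norm_tsum_le_of_forall_le_of_nonneg zero_le_one fun k =>
      (he i m k).trans (pow_le_one₀ hρ0.le hρ1.le)
  set g : Fin q → PowerSeries (ringOfIntegers E) := fun i => PowerSeries.mk fun m =>
    (⟨∑' k, ((coeff m (qslice q (i : ℕ) (r k)) : ringOfIntegers E) : E),
      mem_ringOfIntegers_iff.mpr (hbnd (i : ℕ) m)⟩ : ringOfIntegers E) with hg_def
  have hgcoeff : ∀ (i : Fin q) (m : ℕ),
      ((coeff m (g i) : ringOfIntegers E) : E) =
        ∑' k, ((coeff m (qslice q (i : ℕ) (r k)) : ringOfIntegers E) : E) := by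
    intro i m
    simp only [hg_def]
    rw [coeff_mk]
  have htail : ∀ (i : Fin q) (m K : ℕ),
      ‖((coeff m
          ((∑ k ∈ Finset.range K, qslice q (i : ℕ) (r k)) - g i) : ringOfIntegers E) : E)‖
        ≤ ρ ^ K := by
    intro i m K
    have hco : ((coeff m
          ((∑ k ∈ Finset.range K, qslice q (i : ℕ) (r k)) - g i) : ringOfIntegers E) : E)
        = (∑ k ∈ Finset.range K,
            ((coeff m (qslice q (i : ℕ) (r k)) : ringOfIntegers E) : E))
          - ∑' k, ((coeff m
              (qslice q (i : ℕ) (r k)) : ringOfIntegers E) : E) := by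
      rw [map_sub, map_sum]
      push_cast
      rw [hgcoeff]
    rw [hco, ← Summable.sum_add_tsum_nat_add K (hsummable (i : ℕ) m), sub_add_cancel_left, norm_neg]
    exact IsUltrametricDist.norm_tsum_le_of_forall_le_of_nonneg (pow_nonneg hρ0.le K)
      fun k => (he (i : ℕ) m (k + K)).trans
        (pow_le_pow_of_le_one hρ0.le hρ1.le (Nat.le_add_left K k))
  have htel : ∀ K, f = r K +
      ∑ i : Fin q, ((∑ k ∈ Finset.range K, qslice q (i : ℕ) (r k)).comp P) * X ^ (i : ℕ) := by
    intro K
    induction K with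
    | zero => simp [hr0, comp_zero']
    | succ K ih =>
      have hGs : ∀ i : Fin q,
          ((∑ k ∈ Finset.range (K + 1), qslice q (i : ℕ) (r k)).comp P) * X ^ (i : ℕ)
            = ((∑ k ∈ Finset.range K, qslice q (i : ℕ) (r k)).comp P) * X ^ (i : ℕ)
              + ((qslice q (i : ℕ) (r K)).comp P) * X ^ (i : ℕ) := by
        intro i
        rw [Finset.sum_range_succ, comp_add', add_mul]
      rw [Finset.sum_congr rfl fun i _ => hGs i, Finset.sum_add_distrib, hrs K]
      conv_lhs => rw [ih]
      ring
  have hdiff : ∀ K, BddCoeff (ρ ^ K) (f - ∑ i : Fin q, (g i).comp P * X ^ (i : ℕ)) := by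
    intro K
    have heq : f - ∑ i : Fin q, (g i).comp P * X ^ (i : ℕ)
        = r K + ∑ i : Fin q,
            (((∑ k ∈ Finset.range K, qslice q (i : ℕ) (r k)) - g i).comp P) * X ^ (i : ℕ) := by
      conv_lhs => rw [htel K]
      rw [add_sub_assoc, ← Finset.sum_sub_distrib]
      congr 1
      refine Finset.sum_congr rfl fun i _ => ?_
      rw [comp_sub', sub_mul]
    rw [heq]
    refine bddCoeff_add (hrB K) (bddCoeff_sum (pow_nonneg hρ0.le K) _ fun i _ => ?_)
    have h1 : BddCoeff (ρ ^ K) ((∑ k ∈ Finset.range K, qslice q (i : ℕ) (r k)) - g i) :=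
      fun m => htail i m K
    have h2 := bddCoeff_mul (pow_nonneg hρ0.le K) zero_le_one
      (bddCoeff_comp (pow_nonneg hρ0.le K) h1 P)
      (bddCoeff_one ((X : PowerSeries (ringOfIntegers E)) ^ (i : ℕ)))
    rwa [mul_one] at h2
  have hmain : f = ∑ i : Fin q, (g i).comp P * X ^ (i : ℕ) := by
    have hz : f - ∑ i : Fin q, (g i).comp P * X ^ (i : ℕ) = 0 := by
      ext n
      rw [map_zero]
      exact_mod_cast coeff_eq_zero_of_forall_bdd hρ0.le hρ1 fun K => hdiff K n
    exact sub_eq_zero.mp hz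
  refine ⟨g, hmain, ?_⟩
  intro y hy
  have hz : ∑ i : Fin q, ((y i - g i).comp P) * X ^ (i : ℕ) = 0 := by
    have hcalc : ∑ i : Fin q, ((y i - g i).comp P) * X ^ (i : ℕ)
        = (∑ i : Fin q, (y i).comp P * X ^ (i : ℕ))
          - ∑ i : Fin q, (g i).comp P * X ^ (i : ℕ) := by
      rw [← Finset.sum_sub_distrib]
      exact Finset.sum_congr rfl fun i _ => by rw [comp_sub', sub_mul]
    rw [hcalc, ← hy, ← hmain, sub_self]
  have hbdd : ∀ K : ℕ, ∀ i : Fin q, BddCoeff (ρ ^ K) (y i - g i) := by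
    intro K
    induction K with
    | zero => intro i; rw [pow_zero]; exact bddCoeff_one _
    | succ K ih =>
      have hstep : BddCoeff (ρ ^ (K + 1)) (∑ j : Fin q,
          ((y j - g j).comp ((X : PowerSeries (ringOfIntegers E)) ^ q)) * X ^ (j : ℕ)) := by
        have heq2 : ∑ j : Fin q,
            ((y j - g j).comp ((X : PowerSeries (ringOfIntegers E)) ^ q)) * X ^ (j : ℕ)
              = ∑ j : Fin q,
                (((y j - g j).comp ((X : PowerSeries (ringOfIntegers E)) ^ q))
                  - ((y j - g j).comp P)) * X ^ (j : ℕ) := by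
          conv_lhs => rw [← sub_zero (∑ j : Fin q,
            ((y j - g j).comp ((X : PowerSeries (ringOfIntegers E)) ^ q)) * X ^ (j : ℕ)), ← hz]
          rw [← Finset.sum_sub_distrib]
          exact Finset.sum_congr rfl fun j _ => (sub_mul _ _ _).symm
        rw [heq2, pow_succ]
        refine bddCoeff_sum (mul_nonneg (pow_nonneg hρ0.le K) hρ0.le) _ fun j _ => ?_
        have h1 := bddCoeff_comp_sub (pow_nonneg hρ0.le K) hρ0.le (ih j) hQ
        have h2 := bddCoeff_mul (mul_nonneg (pow_nonneg hρ0.le K) hρ0.le) zero_le_one h1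
          (bddCoeff_one ((X : PowerSeries (ringOfIntegers E)) ^ (j : ℕ)))
        rwa [mul_one] at h2
      intro i
      have hsl : y i - g i = qslice q (i : ℕ) (∑ j : Fin q,
          ((y j - g j).comp ((X : PowerSeries (ringOfIntegers E)) ^ q)) * X ^ (j : ℕ)) :=
        (qslice_assemble hq0 (fun j => y j - g j) i).symm
      rw [hsl]
      exact bddCoeff_qslice hstep q (i : ℕ)
  funext i
  have hzero : y i - g i = 0 := by
    ext m
    rw [map_zero]
    exact_mod_cast coeff_eq_zero_of_forall_bdd hρ0.le hρ1 fun K => hbdd K i m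
  exact sub_eq_zero.mp hzero
end

section
/- Let K be a Galois extension of ℚ_p of prime degree d, let a : Gal(K/ℚ_p) → ℕ be a function with values in the nonnegative integers, and let f : K → K be the ℚ_p-linear map defined by f(x) = Σ_{h ∈ Gal(K/ℚ_p)} a_h · h(x). Then the range of f is either {0}, or the one-dimensional ℚ_p-subspace of K spanned by 1 (i.e. the image of ℚ_p in K), or all of K. -/
open Polynomial

/-- Auxiliary lemma: the weighted sum over powers of a generator as a polynomial in the
generator, and injectivity from coprimality. -/
private lemma aux_inj_of_isCoprime {F K : Type*} [Field F] [Field K] [Algebra F K]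
    [FiniteDimensional F K] {d : ℕ} (T : Module.End F K) (hT : T ^ d = 1)
    {Q : F[X]} (h : IsCoprime Q (X ^ d - 1)) :
    Function.Surjective (Polynomial.aeval T Q) := by
  obtain ⟨u, v, huv⟩ := h
  have h0 : Polynomial.aeval T (X ^ d - 1 : F[X]) = 0 := by
    simp [map_sub, map_pow, hT]
  have hinv : Polynomial.aeval T u * Polynomial.aeval T Q = 1 := by
    have := congrArg (Polynomial.aeval T) huv
    simpa [map_add, map_mul, h0] using this
  have hinj : Function.Injective (Polynomial.aeval T Q) := by
    intro x y hxy
    have : (Polynomial.aeval T u * Polynomial.aeval T Q) x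
        = (Polynomial.aeval T u * Polynomial.aeval T Q) y := by
      simp only [Module.End.mul_apply, hxy]
    simpa [hinv] using this
  exact (LinearMap.injective_iff_surjective).mp hinj

/-- Let `K` be a Galois extension of `ℚ_p` of prime degree `d`, let
`a : Gal(K/ℚ_p) → ℕ`, and let `f : K → K` be `f(x) = Σ_h a_h · h(x)`. Then the range of `f`
is `{0}`, the image of `ℚ_p` in `K`, or all of `K`. -/
theorem range_of_weighted_galois_sum
    {p : ℕ} [Fact p.Prime] (K : Type*) [Field K] [Algebra ℚ_[p] K]
    [FiniteDimensional ℚ_[p] K] [IsGalois ℚ_[p] K]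
    (d : ℕ) (hd : d.Prime) (hdeg : Module.finrank ℚ_[p] K = d)
    (a : (K ≃ₐ[ℚ_[p]] K) → ℕ) :
    Set.range (fun x : K => ∑ h : K ≃ₐ[ℚ_[p]] K, a h • h x) = {0} ∨
      Set.range (fun x : K => ∑ h : K ≃ₐ[ℚ_[p]] K, a h • h x) =
        Set.range (algebraMap ℚ_[p] K) ∨
      Set.range (fun x : K => ∑ h : K ≃ₐ[ℚ_[p]] K, a h • h x) = Set.univ := by
  have hcard : Fintype.card (K ≃ₐ[ℚ_[p]] K) = d := by
    rw [← Nat.card_eq_fintype_card, IsGalois.card_aut_eq_finrank, hdeg]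
  by_cases h0 : ∀ h : K ≃ₐ[ℚ_[p]] K, a h = 0
  · left
    have heq : (fun x : K => ∑ h : K ≃ₐ[ℚ_[p]] K, a h • h x) = fun _ => (0 : K) := by
      funext x; simp [h0]
    rw [heq, Set.range_const]
  by_cases hc : ∀ g h : K ≃ₐ[ℚ_[p]] K, a g = a h
  · -- constant nonzero case: range = image of ℚ_p
    right; left
    push_neg at h0
    obtain ⟨h₀, hh₀⟩ := h0
    have hc0 : ((a h₀ : ℚ_[p])) ≠ 0 := by exact_mod_cast hh₀
    have key : ∀ x : K, ∑ h : K ≃ₐ[ℚ_[p]] K, a h • h x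
        = algebraMap ℚ_[p] K ((a h₀ : ℚ_[p]) * Algebra.trace ℚ_[p] K x) := by
      intro x
      rw [map_mul, trace_eq_sum_automorphisms, Finset.mul_sum]
      refine Finset.sum_congr rfl fun h _ => ?_
      rw [hc h h₀, nsmul_eq_mul]
      congr 1
      simp [map_natCast]
    ext y
    simp only [Set.mem_range]
    constructor
    · rintro ⟨x, rfl⟩
      exact ⟨(a h₀ : ℚ_[p]) * Algebra.trace ℚ_[p] K x, (key x).symm⟩
    · rintro ⟨q, rfl⟩
      obtain ⟨x, hx⟩ := Algebra.trace_surjective ℚ_[p] K ((a h₀ : ℚ_[p])⁻¹ * q)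
      refine ⟨x, ?_⟩
      rw [key x, hx, ← mul_assoc, mul_inv_cancel₀ hc0, one_mul]
  · -- nonconstant case: range = everything
    right; right
    push_neg at hc
    obtain ⟨g₀, h₀, hgh⟩ := hc
    haveI : Fact d.Prime := ⟨hd⟩
    haveI : IsCyclic (K ≃ₐ[ℚ_[p]] K) := isCyclic_of_prime_card (by rw [Nat.card_eq_fintype_card, hcard])
    obtain ⟨σ, hσ⟩ := IsCyclic.exists_generator (α := K ≃ₐ[ℚ_[p]] K)
    have hord : orderOf σ = d := by
      rw [orderOf_eq_card_of_forall_mem_zpowers hσ, Nat.card_eq_fintype_card, hcard]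
    -- the enumeration of the Galois group by powers of σ
    have einj : Function.Injective (fun i : Fin d => σ ^ (i : ℕ)) := by
      intro i j hij
      have := pow_injOn_Iio_orderOf (x := σ)
        (by simpa [hord] using i.isLt) (by simpa [hord] using j.isLt) hij
      exact Fin.ext this
    have ebij : Function.Bijective (fun i : Fin d => σ ^ (i : ℕ)) := by
      rw [Fintype.bijective_iff_injective_and_card]
      exact ⟨einj, by simp [hcard]⟩
    -- the polynomial over ℚ with the weights as coefficients
    set Q₀ : ℚ[X] := ∑ i : Fin d, C ((a (σ ^ (i : ℕ)) : ℚ)) * X ^ (i : ℕ) with hQ₀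
    have hcoeff : ∀ i : Fin d, Q₀.coeff (i : ℕ) = (a (σ ^ (i : ℕ)) : ℚ) := by
      intro i
      rw [hQ₀, Polynomial.finset_sum_coeff]
      rw [Finset.sum_eq_single i]
      · simp
      · intro j _ hj
        have : (j : ℕ) ≠ (i : ℕ) := fun h => hj (Fin.ext h)
        simp only [coeff_C_mul, coeff_X_pow]
        rw [if_neg (Ne.symm this), mul_zero]
      · simp
    -- degree bound
    have hdegQ : Q₀.natDegree ≤ d - 1 := by
      refine Polynomial.natDegree_sum_le_of_forall_le _ _ fun i _ => ?_
      refine le_trans (Polynomial.natDegree_C_mul_le _ _) ?_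
      rw [Polynomial.natDegree_X_pow]
      omega
    -- eval at 1 is positive
    have hne : ∃ i : Fin d, a (σ ^ (i : ℕ)) ≠ 0 := by
      obtain ⟨i, hi⟩ := ebij.surjective g₀
      obtain ⟨j, hj⟩ := ebij.surjective h₀
      by_contra hall
      push_neg at hall
      apply hgh
      rw [← hi, ← hj, hall i, hall j]
    have heval1 : Q₀.eval 1 ≠ 0 := by
      rw [hQ₀]
      simp only [Polynomial.eval_finset_sum, Polynomial.eval_mul, Polynomial.eval_C,
        Polynomial.eval_pow, Polynomial.eval_X, one_pow, mul_one]
      rw [← Nat.cast_sum]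
      rw [Nat.cast_ne_zero]
      obtain ⟨i, hi⟩ := hne
      intro hsum
      exact hi (Finset.sum_eq_zero_iff.mp hsum i (Finset.mem_univ i))
    have hQ₀ne : Q₀ ≠ 0 := fun h => heval1 (by simp [h])
    -- coprime to X - 1
    have hco1 : IsCoprime Q₀ (X - C (1 : ℚ)) := by
      rw [isCoprime_comm, (Polynomial.irreducible_X_sub_C (1 : ℚ)).coprime_iff_not_dvd]
      rw [Polynomial.dvd_iff_isRoot]
      exact fun h => heval1 h
    -- coprime to the cyclotomic polynomial
    have hcoΦ : IsCoprime Q₀ (cyclotomic d ℚ) := by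
      rw [isCoprime_comm, (cyclotomic.irreducible_rat hd.pos).coprime_iff_not_dvd]
      rintro ⟨q, hq⟩
      have hqne : q ≠ 0 := by
        rintro rfl
        exact hQ₀ne (by simpa using hq)
      have hdegs : Q₀.natDegree = (d - 1) + q.natDegree := by
        rw [hq, Polynomial.natDegree_mul (cyclotomic_ne_zero d ℚ) hqne,
          Polynomial.natDegree_cyclotomic, Nat.totient_prime hd]
      have hq0 : q.natDegree = 0 := by omega
      obtain ⟨c, rfl⟩ : ∃ c : ℚ, q = C c := ⟨q.coeff 0, (Polynomial.eq_C_of_natDegree_eq_zero hq0)⟩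
      -- all coefficients of Q₀ below d are equal to c
      have hallc : ∀ i : Fin d, (a (σ ^ (i : ℕ)) : ℚ) = c := by
        intro i
        rw [← hcoeff i, hq, cyclotomic_prime ℚ d, Polynomial.coeff_mul_C,
          Polynomial.finset_sum_coeff]
        have hone : ∑ j ∈ Finset.range d, (X ^ j : ℚ[X]).coeff (i : ℕ) = 1 := by
          simp only [coeff_X_pow]
          rw [Finset.sum_ite_eq (Finset.range d) ((i : ℕ)) (fun _ => (1 : ℚ))]
          simp [i.isLt]
        rw [hone, one_mul]
      apply hgh
      obtain ⟨i, hi⟩ := ebij.surjective g₀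
      obtain ⟨j, hj⟩ := ebij.surjective h₀
      have := (hallc i).trans (hallc j).symm
      rw [Nat.cast_inj] at this
      rw [← hi, ← hj]; exact this
    -- coprime to X^d - 1
    have hcoX : IsCoprime Q₀ (X ^ d - 1 : ℚ[X]) := by
      have := hco1.mul_right hcoΦ
      rwa [C_1, mul_comm, cyclotomic_prime_mul_X_sub_one ℚ d] at this
    -- pass to ℚ_p
    set Q : ℚ_[p][X] := Q₀.map (algebraMap ℚ ℚ_[p]) with hQ
    have hcoQ : IsCoprime Q (X ^ d - 1 : ℚ_[p][X]) := by
      have := (Polynomial.isCoprime_map (p := Q₀) (q := X ^ d - 1) (algebraMap ℚ ℚ_[p])).mpr hcoX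
      simpa [Polynomial.map_sub, Polynomial.map_pow] using this
    -- σ as a linear endomorphism
    set T : Module.End ℚ_[p] K := σ.toLinearMap with hT
    have hTd : T ^ d = 1 := by
      rw [hT, ← AlgEquiv.pow_toLinearMap]
      have : σ ^ d = 1 := by rw [← hcard]; exact pow_card_eq_one
      rw [this]
      rfl
    have hsurj : Function.Surjective (Polynomial.aeval T Q) :=
      aux_inj_of_isCoprime T hTd hcoQ
    -- identify the map with the weighted sum
    have hfeq : ∀ x : K, (Polynomial.aeval T Q) x = ∑ h : K ≃ₐ[ℚ_[p]] K, a h • h x := by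
      intro x
      rw [← Fintype.sum_bijective _ ebij _ _ (fun i => rfl)]
      rw [hQ, hQ₀]
      rw [Polynomial.map_sum]
      simp only [Polynomial.map_mul, Polynomial.map_C, Polynomial.map_pow, Polynomial.map_X,
        map_sum, map_mul, Polynomial.aeval_C, Polynomial.aeval_X_pow]
      rw [LinearMap.sum_apply]
      refine Finset.sum_congr rfl fun i _ => ?_
      rw [Module.End.mul_apply, Module.algebraMap_end_apply]
      rw [hT, ← AlgEquiv.pow_toLinearMap]
      simp [Nat.cast_smul_eq_nsmul]
    rw [Set.range_eq_univ]
    intro y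
    obtain ⟨x, hx⟩ := hsurj y
    refine ⟨x, ?_⟩
    show (∑ h : K ≃ₐ[ℚ_[p]] K, a h • h x) = y
    rw [← hfeq x]; exact hx
end
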